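/- arXiv:1201.6654 — 6 statements merged into one kernel-verified Lean document; each statement's English description precedes it below -/
import Mathlib

section
/- For every ε, δ > 0 there exists a constant C = C(ε,δ) such that the following holds. Let 𝒢 be a d-regular simple graph on n vertices (d ≥ 1) and let α ∈ [0,1]. Suppose that every set A of vertices with |A| ≥ (α + δ)·n satisfies 2·e(𝒢[A]) ≥ ε·|A|·d, where e(𝒢[A]) is the number of edges of 𝒢 with both endpoints in A. Then for every integer m ≥ C·n/d, the number of independent sets of size m in 𝒢 satisfies I(𝒢,m) ≤ binom(⌈(α + 2δ)·n⌉, m). -/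
open Finset

def IsIndepFinset {V : Type*} (G : SimpleGraph V) (s : Finset V) : Prop :=
  ∀ x ∈ s, ∀ y ∈ s, ¬ G.Adj x y

attribute [local instance] Classical.propDecidable

namespace KW

variable {V : Type} [Fintype V] [DecidableEq V] [Nonempty V]
  (G : SimpleGraph V) [DecidableRel G.Adj] (R₀ : ℝ)

noncomputable def pickV (A : Finset V) : V :=
  if h : A.Nonempty then
    (Finset.exists_max_image A (fun v => (A.filter (G.Adj v)).card) h).choose
  else Classical.arbitrary V

lemma pickV_mem {A : Finset V} (h : A.Nonempty) : pickV G A ∈ A := by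
  rw [pickV, dif_pos h]
  exact (Finset.exists_max_image A (fun v => (A.filter (G.Adj v)).card) h).choose_spec.1

lemma pickV_max {A : Finset V} (h : A.Nonempty) {b : V} (hb : b ∈ A) :
    (A.filter (G.Adj b)).card ≤ (A.filter (G.Adj (pickV G A))).card := by
  rw [pickV, dif_pos h]
  exact (Finset.exists_max_image A (fun v => (A.filter (G.Adj v)).card) h).choose_spec.2 b hb

noncomputable def stepF (W : Finset V) (p : Finset V × Finset V) : Finset V × Finset V :=
  if R₀ ≤ (p.1.card : ℝ) then
    (if pickV G p.1 ∈ W then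
      (p.1 \ insert (pickV G p.1) (G.neighborFinset (pickV G p.1)), insert (pickV G p.1) p.2)
     else (p.1.erase (pickV G p.1), p.2))
  else p

noncomputable def traj (W : Finset V) (k : ℕ) : Finset V × Finset V :=
  (stepF G R₀ W)^[k] (Finset.univ, ∅)

lemma traj_zero (W : Finset V) : traj G R₀ W 0 = (Finset.univ, ∅) := rfl

lemma traj_succ (W : Finset V) (k : ℕ) :
    traj G R₀ W (k+1) = stepF G R₀ W (traj G R₀ W k) := by
  rw [traj, Function.iterate_succ_apply', traj]

lemma sndSubset (W : Finset V) (k : ℕ) : (traj G R₀ W k).2 ⊆ (traj G R₀ W (k+1)).2 := by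
  rw [traj_succ, stepF]
  split_ifs with h1 h2
  · exact Finset.subset_insert _ _
  · exact Finset.Subset.refl _
  · exact Finset.Subset.refl _

lemma sndMono (W : Finset V) {j k : ℕ} (h : j ≤ k) :
    (traj G R₀ W j).2 ⊆ (traj G R₀ W k).2 := by
  induction k with
  | zero => simpa [Nat.le_zero.mp h] using Finset.Subset.refl _
  | succ k ih =>
    rcases Nat.eq_or_lt_of_le h with rfl | h'
    · exact Finset.Subset.refl _
    · exact (ih (Nat.lt_succ_iff.mp h')).trans (sndSubset G R₀ W k)

lemma snd_subset_W (W : Finset V) (k : ℕ) : (traj G R₀ W k).2 ⊆ W := by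
  induction k with
  | zero => simp [traj_zero]
  | succ k ih =>
    rw [traj_succ, stepF]
    split_ifs with h1 h2
    · exact Finset.insert_subset h2 ih
    · exact ih
    · exact ih

lemma W_subset (W : Finset V) (hW : ∀ x ∈ W, ∀ y ∈ W, ¬ G.Adj x y) (k : ℕ) :
    W ⊆ (traj G R₀ W k).1 ∪ (traj G R₀ W k).2 := by
  induction k with
  | zero => simp [traj_zero]
  | succ k ih =>
    intro w hw
    have hw' := ih hw
    rw [traj_succ, stepF]
    split_ifs with h1 h2
    · -- selected
      simp only [Finset.mem_union, Finset.mem_sdiff, Finset.mem_insert] at hw' ⊢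
      rcases hw' with hA | hS
      · by_cases hwv : w = pickV G (traj G R₀ W k).1
        · right; left; exact hwv
        · left
          refine ⟨hA, ?_⟩
          rintro (h | h)
          · exact hwv h
          · rw [SimpleGraph.mem_neighborFinset] at h
            exact hW _ h2 _ hw h
      · right; right; exact hS
    · -- discarded : pick ∉ W, so w ≠ pick
      simp only [Finset.mem_union, Finset.mem_erase] at hw' ⊢
      rcases hw' with hA | hS
      · left
        refine ⟨fun hc => h2 (hc ▸ hw), hA⟩
      · right; exact hS
    · exact hw'

-- selected-step card drop
lemma card_sel_drop {A : Finset V} (h : A.Nonempty) :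
    ((A \ insert (pickV G A) (G.neighborFinset (pickV G A))).card : ℝ) ≤
      (A.card : ℝ) - 1 - ((A.filter (G.Adj (pickV G A))).card : ℝ) := by
  set v := pickV G A with hv
  have hvA : v ∈ A := pickV_mem G h
  have h1 : A ∩ insert v (G.neighborFinset v) = insert v (A.filter (G.Adj v)) := by
    ext x
    simp only [Finset.mem_inter, Finset.mem_insert, Finset.mem_filter,
      SimpleGraph.mem_neighborFinset]
    constructor
    · rintro ⟨hx, (rfl | ha)⟩
      · exact Or.inl rfl
      · exact Or.inr ⟨hx, ha⟩
    · rintro (rfl | ⟨hx, ha⟩)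
      · exact ⟨hvA, Or.inl rfl⟩
      · exact ⟨hx, Or.inr ha⟩
  have h2 : (A ∩ insert v (G.neighborFinset v)).card
      = (A.filter (G.Adj v)).card + 1 := by
    rw [h1, Finset.card_insert_of_notMem]
    simp [SimpleGraph.irrefl]
  have h3 : A \ insert v (G.neighborFinset v) = A \ (A ∩ insert v (G.neighborFinset v)) := by
    rw [Finset.sdiff_inter_self_left]
  have h4 : (A \ insert v (G.neighborFinset v)).card
      = A.card - ((A.filter (G.Adj v)).card + 1) := by
    rw [h3, Finset.card_sdiff_of_subset Finset.inter_subset_left, h2]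
  have h5 : (A.filter (G.Adj v)).card + 1 ≤ A.card := by
    rw [← h2]; exact Finset.card_le_card Finset.inter_subset_left
  rw [h4]
  push_cast [h5]
  ring_nf
  norm_num

-- invariant
lemma inv (W : Finset V) (θ : ℝ) (hθ : 0 ≤ θ) (hR₀ : 0 < R₀)
    (Hθ : ∀ A : Finset V, R₀ ≤ (A.card : ℝ) → θ ≤ ((A.filter (G.Adj (pickV G A))).card : ℝ))
    (k : ℕ) :
    ((traj G R₀ W k).1.card : ℝ) + θ * (traj G R₀ W k).2.card ≤ Fintype.card V := by
  induction k with
  | zero => simp [traj, Finset.card_univ]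
  | succ k ih =>
    rw [traj_succ, stepF]
    set p := traj G R₀ W k
    split_ifs with h1 h2
    · -- selected
      have hne : p.1.Nonempty := by
        rw [← Finset.card_pos]
        exact_mod_cast lt_of_lt_of_le hR₀ h1
      have hdrop := card_sel_drop G hne
      have hmax := Hθ p.1 h1
      have hins : ((insert (pickV G p.1) p.2).card : ℝ) ≤ (p.2.card : ℝ) + 1 := by
        exact_mod_cast Finset.card_insert_le _ _
      calc ((p.1 \ insert (pickV G p.1) (G.neighborFinset (pickV G p.1))).card : ℝ)
            + θ * ((insert (pickV G p.1) p.2).card)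
          ≤ ((p.1.card : ℝ) - 1 - θ) + θ * ((p.2.card : ℝ) + 1) := by
            have := mul_le_mul_of_nonneg_left hins hθ
            nlinarith [hdrop, hmax]
        _ ≤ (p.1.card : ℝ) + θ * p.2.card := by ring_nf; nlinarith
        _ ≤ Fintype.card V := ih
    · -- discarded
      have : ((p.1.erase (pickV G p.1)).card : ℝ) ≤ p.1.card := by
        exact_mod_cast Finset.card_le_card (Finset.erase_subset _ _)
      calc ((p.1.erase (pickV G p.1)).card : ℝ) + θ * p.2.card
          ≤ (p.1.card : ℝ) + θ * p.2.card := by linarith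
        _ ≤ _ := ih
    · exact ih

-- termination
lemma term_aux (W : Finset V) (hR₀ : 0 < R₀) (k : ℕ) :
    ((traj G R₀ W k).1.card : ℝ) ≤ Fintype.card V - k ∨ ((traj G R₀ W k).1.card : ℝ) < R₀ := by
  induction k with
  | zero => left; simp [traj, Finset.card_univ]
  | succ k ih =>
    by_cases h1 : R₀ ≤ ((traj G R₀ W k).1.card : ℝ)
    · left
      have hne : (traj G R₀ W k).1.Nonempty := by
        rw [← Finset.card_pos]
        exact_mod_cast lt_of_lt_of_le hR₀ h1
      have hdrop : ((traj G R₀ W (k+1)).1.card : ℝ) ≤ ((traj G R₀ W k).1.card : ℝ) - 1 := by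
        rw [traj_succ, stepF, if_pos h1]
        split_ifs with h2
        · have : (traj G R₀ W k).1 \ insert (pickV G (traj G R₀ W k).1)
              (G.neighborFinset (pickV G (traj G R₀ W k).1)) ⊆
              (traj G R₀ W k).1.erase (pickV G (traj G R₀ W k).1) := by
            intro x hx
            simp only [Finset.mem_sdiff, Finset.mem_insert, Finset.mem_erase] at hx ⊢
            exact ⟨fun hc => hx.2 (Or.inl hc), hx.1⟩
          have hle := Finset.card_le_card this
          have := Finset.card_erase_of_mem (pickV_mem G hne)
          have hpos : 1 ≤ (traj G R₀ W k).1.card := Finset.card_pos.mpr hne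
          simp only [this] at hle
          have : ((traj G R₀ W k).1 \ insert (pickV G (traj G R₀ W k).1)
              (G.neighborFinset (pickV G (traj G R₀ W k).1))).card ≤ (traj G R₀ W k).1.card - 1 :=
            hle
          calc (((traj G R₀ W k).1 \ _).card : ℝ) ≤ (((traj G R₀ W k).1.card - 1 : ℕ) : ℝ) := by
                exact_mod_cast this
            _ = ((traj G R₀ W k).1.card : ℝ) - 1 := by push_cast [hpos]; ring
        · have hpos : 1 ≤ (traj G R₀ W k).1.card := Finset.card_pos.mpr hne
          rw [Finset.card_erase_of_mem (pickV_mem G hne)]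
          push_cast [hpos]
          linarith
      rcases ih with ih | ih
      · push_cast
        linarith
      · linarith
    · right
      rw [traj_succ, stepF, if_neg h1]
      push_neg at h1
      exact h1

lemma final_small (W : Finset V) (hR₀ : 0 < R₀) :
    (((traj G R₀ W (Fintype.card V)).1.card : ℝ)) < R₀ := by
  rcases term_aux G R₀ W hR₀ (Fintype.card V) with h | h
  · have h0 : ((traj G R₀ W (Fintype.card V)).1.card : ℝ) ≤ 0 := by
      simpa using h
    linarith
  · exact h

-- replay
lemma replay (W : Finset V) {k : ℕ} (hk : k ≤ Fintype.card V) :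
    traj G R₀ W k = traj G R₀ ((traj G R₀ W (Fintype.card V)).2) k := by
  set S := (traj G R₀ W (Fintype.card V)).2 with hS
  induction k with
  | zero => rfl
  | succ k ih =>
    have hk' : k ≤ Fintype.card V := Nat.le_of_succ_le hk
    have heq := ih hk'
    rw [traj_succ, traj_succ, ← heq, stepF, stepF]
    by_cases h1 : R₀ ≤ ((traj G R₀ W k).1.card : ℝ)
    · rw [if_pos h1, if_pos h1]
      by_cases h2 : pickV G (traj G R₀ W k).1 ∈ W
      · have h3 : pickV G (traj G R₀ W k).1 ∈ S := by
          have : pickV G (traj G R₀ W k).1 ∈ (traj G R₀ W (k+1)).2 := by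
            rw [traj_succ, stepF, if_pos h1, if_pos h2]
            exact Finset.mem_insert_self _ _
          exact sndMono G R₀ W hk this
        rw [if_pos h2, if_pos h3]
      · have h3 : pickV G (traj G R₀ W k).1 ∉ S := fun hc =>
          h2 (snd_subset_W G R₀ W (Fintype.card V) hc)
        rw [if_neg h2, if_neg h3]
    · rw [if_neg h1, if_neg h1]


lemma pairs_card (A : Finset V) :
    ((A ×ˢ A).filter fun p => G.Adj p.1 p.2).card = ∑ a ∈ A, (A.filter (G.Adj a)).card := by
  rw [Finset.card_eq_sum_card_fiberwise (f := Prod.fst) (t := A)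
    (fun p hp => (Finset.mem_product.mp (Finset.mem_filter.mp hp).1).1)]
  apply Finset.sum_congr rfl
  intro a ha
  have hfib : ((A ×ˢ A).filter (fun p => G.Adj p.1 p.2)).filter (fun p => p.1 = a)
      = {a} ×ˢ (A.filter (G.Adj a)) := by
    ext ⟨x, y⟩
    simp only [Finset.mem_filter, Finset.mem_product, Finset.mem_singleton]
    constructor
    · rintro ⟨⟨⟨hx, hy⟩, hadj⟩, rfl⟩
      exact ⟨rfl, hy, hadj⟩
    · rintro ⟨rfl, hy, hadj⟩
      exact ⟨⟨⟨ha, hy⟩, hadj⟩, rfl⟩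
  rw [hfib, Finset.card_product, Finset.card_singleton, one_mul]

lemma count_le (hR₀ : 0 < R₀) (θ : ℝ) (hθ : 0 < θ)
    (Hθ : ∀ A : Finset V, R₀ ≤ (A.card : ℝ) → θ ≤ ((A.filter (G.Adj (pickV G A))).card : ℝ))
    (m q R : ℕ)
    (hq : ∀ s : ℕ, (s : ℝ) * θ ≤ (Fintype.card V : ℝ) → s ≤ q)
    (hR : ∀ s : ℕ, (s : ℝ) < R₀ → s ≤ R) :
    (Finset.univ.filter fun s : Finset V => s.card = m ∧ IsIndepFinset G s).card ≤
      ∑ s ∈ Finset.range (q+1), (Fintype.card V).choose s * R.choose (m - s) := by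
  classical
  set N := Fintype.card V with hN
  set F := Finset.univ.filter fun s : Finset V => s.card = m ∧ IsIndepFinset G s with hF
  set Φ : Finset V → Finset V × Finset V := fun I => ((traj G R₀ I N).2, I \ (traj G R₀ I N).2)
    with hΦ
  set Bf := (Finset.univ.filter fun S : Finset V => S.card ≤ q).biUnion
      (fun S => {S} ×ˢ ((traj G R₀ S N).1.powersetCard (m - S.card))) with hBf
  have hcard_q : ∀ I : Finset V, (traj G R₀ I N).2.card ≤ q := by
    intro I
    have h1 := inv G R₀ I θ hθ.le hR₀ Hθ N
    have h2 : θ * ((traj G R₀ I N).2.card : ℝ) ≤ N := by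
      have : (0:ℝ) ≤ ((traj G R₀ I N).1.card : ℝ) := Nat.cast_nonneg _
      linarith
    exact hq _ (by linarith [h2])
  have hmaps : ∀ I ∈ F, Φ I ∈ Bf := by
    intro I hI
    rw [hF, Finset.mem_filter] at hI
    obtain ⟨-, hIm, hInd⟩ := hI
    have hSI : (traj G R₀ I N).2 ⊆ I := snd_subset_W G R₀ I N
    rw [hBf, Finset.mem_biUnion]
    refine ⟨(traj G R₀ I N).2, ?_, ?_⟩
    · exact Finset.mem_filter.mpr ⟨Finset.mem_univ _, hcard_q I⟩
    · rw [Finset.mem_product]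
      constructor
      · simp [hΦ]
      · rw [Finset.mem_powersetCard]
        constructor
        · rw [← replay G R₀ I (le_refl N)]
          intro x hx
          rw [Finset.mem_sdiff] at hx
          have := W_subset G R₀ I hInd N hx.1
          rw [Finset.mem_union] at this
          exact this.resolve_right hx.2
        · show (I \ (traj G R₀ I N).2).card = m - (traj G R₀ I N).2.card
          rw [Finset.card_sdiff_of_subset hSI, hIm]
  have hinj : Set.InjOn Φ F := by
    intro I hI I' hI' heq
    simp only [Finset.coe_filter, Set.mem_setOf_eq, hF] at hI hI'
    have h1 : (traj G R₀ I N).2 = (traj G R₀ I' N).2 := congrArg Prod.fst heq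
    have h2 : I \ (traj G R₀ I N).2 = I' \ (traj G R₀ I' N).2 := congrArg Prod.snd heq
    have hSI : (traj G R₀ I N).2 ⊆ I := snd_subset_W G R₀ I N
    have hSI' : (traj G R₀ I' N).2 ⊆ I' := snd_subset_W G R₀ I' N
    calc I = (traj G R₀ I N).2 ∪ (I \ (traj G R₀ I N).2) := (Finset.union_sdiff_of_subset hSI).symm
      _ = (traj G R₀ I' N).2 ∪ (I' \ (traj G R₀ I' N).2) := by rw [h2, h1]
      _ = I' := Finset.union_sdiff_of_subset hSI'
  have h1 : F.card ≤ Bf.card := Finset.card_le_card_of_injOn Φ hmaps hinj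
  have h2 : Bf.card ≤ ∑ S ∈ (Finset.univ.filter fun S : Finset V => S.card ≤ q),
      ({S} ×ˢ ((traj G R₀ S N).1.powersetCard (m - S.card))).card :=
    Finset.card_biUnion_le
  have h3 : ∀ S ∈ (Finset.univ.filter fun S : Finset V => S.card ≤ q),
      ({S} ×ˢ ((traj G R₀ S N).1.powersetCard (m - S.card))).card ≤ R.choose (m - S.card) := by
    intro S _
    rw [Finset.card_product, Finset.card_singleton, one_mul, Finset.card_powersetCard]
    apply Nat.choose_le_choose
    apply hR
    exact final_small G R₀ S hR₀
  have h4 : ∑ S ∈ (Finset.univ.filter fun S : Finset V => S.card ≤ q),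
      ({S} ×ˢ ((traj G R₀ S N).1.powersetCard (m - S.card))).card ≤
      ∑ S ∈ (Finset.univ.filter fun S : Finset V => S.card ≤ q), R.choose (m - S.card) :=
    Finset.sum_le_sum h3
  have h5 : ∑ S ∈ (Finset.univ.filter fun S : Finset V => S.card ≤ q), R.choose (m - S.card) ≤
      ∑ s ∈ Finset.range (q+1), N.choose s * R.choose (m - s) := by
    rw [← Finset.sum_fiberwise_of_maps_to (g := fun S : Finset V => S.card)
      (t := Finset.range (q+1)) (fun S hS => by
        rw [Finset.mem_filter] at hS
        exact Finset.mem_range.mpr (Nat.lt_succ_of_le hS.2))]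
    apply Finset.sum_le_sum
    intro s _
    have hsub : ((Finset.univ.filter fun S : Finset V => S.card ≤ q).filter
        fun S => S.card = s) ⊆ Finset.univ.filter fun S : Finset V => S.card = s := by
      intro S hS
      rw [Finset.mem_filter] at hS ⊢
      exact ⟨Finset.mem_univ _, hS.2⟩
    have hcard : ((Finset.univ.filter fun S : Finset V => S.card ≤ q).filter
        fun S => S.card = s).card ≤ N.choose s := by
      have heq : (Finset.univ.filter fun S : Finset V => S.card = s) =
          Finset.powersetCard s (Finset.univ : Finset V) := by
        rw [Finset.powersetCard_eq_filter, Finset.powerset_univ]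
      calc _ ≤ (Finset.univ.filter fun S : Finset V => S.card = s).card :=
            Finset.card_le_card hsub
        _ = N.choose s := by rw [heq, Finset.card_powersetCard, Finset.card_univ]
    calc ∑ S ∈ ((Finset.univ.filter fun S : Finset V => S.card ≤ q).filter
          fun S => S.card = s), R.choose (m - S.card)
        = ∑ S ∈ ((Finset.univ.filter fun S : Finset V => S.card ≤ q).filter
          fun S => S.card = s), R.choose (m - s) := by
          apply Finset.sum_congr rfl
          intro S hS
          rw [(Finset.mem_filter.mp hS).2]
      _ = ((Finset.univ.filter fun S : Finset V => S.card ≤ q).filter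
          fun S => S.card = s).card * R.choose (m - s) := by
          rw [Finset.sum_const, smul_eq_mul]
      _ ≤ N.choose s * R.choose (m - s) :=
          Nat.mul_le_mul_right _ hcard
  omega

end KW

namespace KWnum

lemma chooseR (n k : ℕ) (h : k ≤ n) :
    (n.choose (k+1) : ℝ) * (k+1) = (n.choose k : ℝ) * ((n:ℝ) - k) := by
  have h1 : (n.choose (k+1) * (k+1) : ℕ) = n.choose k * (n - k) := Nat.choose_succ_right_eq n k
  have h2 : ((n.choose (k+1) * (k+1) : ℕ) : ℝ) = ((n.choose k * (n - k) : ℕ) : ℝ) := by rw [h1]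
  push_cast [h] at h2
  linarith

lemma choose_shift (K m : ℕ) (hm : m ≤ K) :
    ∀ s ≤ m, (K.choose (m - s) : ℝ) * (((K : ℝ) - m + 1) / m) ^ s ≤ (K.choose m : ℝ) := by
  intro s
  induction s with
  | zero => intro _; simp
  | succ s ih =>
    intro hs
    have hs' : s ≤ m := Nat.le_of_succ_le hs
    have hm0 : 0 < m := lt_of_lt_of_le (Nat.succ_pos s) hs
    have hm0' : (0:ℝ) < m := by exact_mod_cast hm0
    have hKm : (0:ℝ) < (K:ℝ) - m + 1 := by
      have : (m:ℝ) ≤ K := by exact_mod_cast hm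
      linarith
    have hcpos : (0:ℝ) ≤ ((K : ℝ) - m + 1) / m := le_of_lt (div_pos hKm hm0')
    set j := m - (s+1) with hj
    have hj1 : m - s = j + 1 := by omega
    have hjK : j ≤ K := le_trans (Nat.sub_le _ _) hm
    have hid := chooseR K j hjK
    have hjpos : (0:ℝ) < (j:ℝ) + 1 := by positivity
    have hj1m : (j:ℝ) + 1 ≤ m := by
      have : j + 1 ≤ m := by omega
      exact_mod_cast this
    have hKj : (K:ℝ) - m + 1 ≤ (K:ℝ) - j := by linarith
    have key : (K.choose j : ℝ) * (((K : ℝ) - m + 1) / m) ≤ (K.choose (j+1) : ℝ) := by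
      have h2 : (K.choose (j+1) : ℝ) = (K.choose j : ℝ) * (((K:ℝ) - j) / ((j:ℝ)+1)) := by
        field_simp
        linarith [hid]
      rw [h2]
      apply mul_le_mul_of_nonneg_left _ (Nat.cast_nonneg _)
      rw [div_le_div_iff₀ hm0' hjpos]
      nlinarith [mul_le_mul_of_nonneg_right hKj hjpos.le,
        mul_le_mul_of_nonneg_left hj1m (by linarith : (0:ℝ) ≤ (K:ℝ) - j)]
    calc (K.choose (m - (s+1)) : ℝ) * (((K : ℝ) - m + 1) / m) ^ (s+1)
        = ((K.choose j : ℝ) * (((K : ℝ) - m + 1) / m)) * (((K : ℝ) - m + 1) / m) ^ s := by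
          rw [← hj]; ring
      _ ≤ (K.choose (j+1) : ℝ) * (((K : ℝ) - m + 1) / m) ^ s :=
          mul_le_mul_of_nonneg_right key (pow_nonneg hcpos s)
      _ = (K.choose (m - s) : ℝ) * (((K : ℝ) - m + 1) / m) ^ s := by rw [hj1]
      _ ≤ (K.choose m : ℝ) := ih hs'

lemma choose_base (K R : ℕ) (hRK : R ≤ K) :
    ∀ t ≤ R, (R.choose t : ℝ) * ((K : ℝ) / R) ^ t ≤ (K.choose t : ℝ) := by
  intro t
  induction t with
  | zero => intro _; simp
  | succ t ih =>
    intro ht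
    have ht' : t ≤ R := Nat.le_of_succ_le ht
    have hR0 : 0 < R := lt_of_lt_of_le (Nat.succ_pos t) ht
    have hR0' : (0:ℝ) < R := by exact_mod_cast hR0
    have htK : t ≤ K := le_trans ht' hRK
    have hidR := chooseR R t ht'
    have hidK := chooseR K t htK
    have htpos : (0:ℝ) < (t:ℝ) + 1 := by positivity
    have htR' : (t:ℝ) ≤ R := by exact_mod_cast ht'
    have htK' : (t:ℝ) ≤ K := by exact_mod_cast htK
    have hKR : (R:ℝ) ≤ K := by exact_mod_cast hRK
    have hRchoose : (R.choose (t+1) : ℝ) = (R.choose t : ℝ) * (((R:ℝ) - t) / ((t:ℝ)+1)) := by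
      field_simp
      linarith [hidR]
    have hKchoose : (K.choose (t+1) : ℝ) = (K.choose t : ℝ) * (((K:ℝ) - t) / ((t:ℝ)+1)) := by
      field_simp
      linarith [hidK]
    have hfac : ((R:ℝ) - t) * ((K:ℝ)/R) ≤ (K:ℝ) - t := by
      rw [← mul_div_assoc, div_le_iff₀ hR0']
      nlinarith [mul_le_mul_of_nonneg_left hKR (Nat.cast_nonneg (α := ℝ) t)]
    have hchpos : (0:ℝ) ≤ (R.choose t : ℝ) := Nat.cast_nonneg _
    have hKRpow : (0:ℝ) ≤ ((K:ℝ)/R) ^ t := by positivity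
    calc (R.choose (t+1) : ℝ) * ((K : ℝ) / R) ^ (t+1)
        = ((R.choose t : ℝ) * ((K:ℝ)/R)^t) * (((R:ℝ) - t) * ((K:ℝ)/R)) / ((t:ℝ)+1) := by
          rw [hRchoose]; ring
      _ ≤ ((R.choose t : ℝ) * ((K:ℝ)/R)^t) * ((K:ℝ) - t) / ((t:ℝ)+1) := by
          gcongr
      _ ≤ (K.choose t : ℝ) * ((K:ℝ) - t) / ((t:ℝ)+1) := by
          gcongr
          exact ih ht'
      _ = (K.choose (t+1) : ℝ) := by rw [hKchoose]; ring

lemma pow_fact_mono (B : ℝ) (hB : 0 ≤ B) :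
    ∀ q : ℕ, (q:ℝ) ≤ B → ∀ s ≤ q, B^s / (Nat.factorial s) ≤ B^q / (Nat.factorial q) := by
  intro q
  induction q with
  | zero => intro _ s hs; simp [Nat.le_zero.mp hs]
  | succ q ih =>
    intro hq s hs
    rcases Nat.eq_or_lt_of_le hs with rfl | hlt
    · exact le_refl _
    have hs' : s ≤ q := Nat.lt_succ_iff.mp hlt
    have hq' : (q:ℝ) ≤ B := by push_cast at hq; linarith
    refine (ih hq' s hs').trans ?_
    have h1 : B^(q+1) / (Nat.factorial (q+1) : ℝ) = (B^q / (Nat.factorial q : ℝ)) * (B / ((q:ℝ)+1)) := by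
      rw [pow_succ, Nat.factorial_succ]
      push_cast
      have : (Nat.factorial q : ℝ) ≠ 0 := by exact_mod_cast (Nat.factorial_pos q).ne'
      field_simp
    rw [h1]
    have h2 : (1:ℝ) ≤ B / ((q:ℝ)+1) := by
      rw [le_div_iff₀ (by positivity)]
      push_cast at hq
      linarith
    have h3 : (0:ℝ) ≤ B^q / (Nat.factorial q : ℝ) := by positivity
    exact le_mul_of_one_le_right h3 h2

lemma qlog_le (q Q B : ℝ) (hq : 0 < q) (hqQ : q ≤ Q) (hB : 0 < B)
    (ht : 1 ≤ Real.log (Real.exp 2 * B / Q)) (hQ : 0 < Q) :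
    q * Real.log (Real.exp 2 * B / q) ≤ Q * Real.log (Real.exp 2 * B / Q) := by
  set t := Real.exp 2 * B / Q with htdef
  have htpos : 0 < t := by positivity
  have hx : 0 < Real.exp 2 * B / q / t := by positivity
  have h1 : Real.log (Real.exp 2 * B / q) ≤ Real.exp 2 * B / q / t - 1 + Real.log t := by
    have h := Real.log_le_sub_one_of_pos hx
    rw [Real.log_div (by positivity) (ne_of_gt htpos)] at h
    linarith
  have h2 : q * (Real.exp 2 * B / q / t) = Q := by
    rw [htdef]
    field_simp
  calc q * Real.log (Real.exp 2 * B / q)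
      ≤ q * (Real.exp 2 * B / q / t - 1 + Real.log t) :=
        mul_le_mul_of_nonneg_left h1 hq.le
    _ = Q + q * (Real.log t - 1) := by rw [← h2]; ring
    _ ≤ Q + Q * (Real.log t - 1) := by nlinarith
    _ = Q * Real.log t := by ring

end KWnum


set_option maxHeartbeats 1000000 in
theorem stmt_4 :
    ∀ ε δ : ℝ, 0 < ε → 0 < δ →
      ∃ C : ℝ,
        ∀ (V : Type) [Fintype V] [DecidableEq V] (G : SimpleGraph V) [DecidableRel G.Adj]
          (d : ℕ), 1 ≤ d → G.IsRegularOfDegree d →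
          ∀ α : ℝ, 0 ≤ α → α ≤ 1 →
            -- `2·e(𝒢[A])` is the number of ordered adjacent pairs with both ends in `A`
            (∀ A : Finset V, (α + δ) * (Fintype.card V : ℝ) ≤ (A.card : ℝ) →
              ε * (A.card : ℝ) * (d : ℝ) ≤
                (((A ×ˢ A).filter fun p => G.Adj p.1 p.2).card : ℝ)) →
            ∀ m : ℕ, C * (Fintype.card V : ℝ) / (d : ℝ) ≤ (m : ℝ) →
              (({s : Finset V | s.card = m ∧ IsIndepFinset G s} : Set (Finset V)).ncard : ℝ) ≤
                ((⌈(α + 2 * δ) * (Fintype.card V : ℝ)⌉₊).choose m : ℝ) := by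
  intro ε δ hε hδ
  have h1δ : (0:ℝ) < 1 + δ := by linarith
  set δ₁ := δ / (1 + δ) with hδ₁def
  have hδ₁pos : 0 < δ₁ := div_pos hδ h1δ
  set c₂ := Real.log (1 + δ₁) / 2 with hc₂def
  have hlogpos : 0 < Real.log (1 + δ₁) := Real.log_pos (by linarith)
  have hc₂pos : 0 < c₂ := by rw [hc₂def]; positivity
  set T := max 2 ((2/c₂) * (1 + Real.log (1/δ) + Real.log (2/c₂))) with hTdef
  have hT2 : (2:ℝ) ≤ T := le_max_left _ _
  have hTpos : (0:ℝ) < T := by linarith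
  refine ⟨T / ε, ?_⟩
  intro V _ _ G _ d hd _ α hα0 hα1 hedge m hm
  classical
  have hd0 : (0:ℝ) < (d:ℝ) := by exact_mod_cast hd
  set N := Fintype.card V with hN
  have hset : ({s : Finset V | s.card = m ∧ IsIndepFinset G s} : Set (Finset V)) =
      ↑(Finset.univ.filter fun s : Finset V => s.card = m ∧ IsIndepFinset G s) := by
    ext s
    simp
  rw [hset, Set.ncard_coe_finset]
  set F := Finset.univ.filter fun s : Finset V => s.card = m ∧ IsIndepFinset G s with hF
  set K := ⌈(α + 2 * δ) * (N : ℝ)⌉₊ with hK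
  have htriv : F.card ≤ N.choose m := by
    have hsub : F ⊆ Finset.powersetCard m (Finset.univ : Finset V) := by
      intro s hs
      rw [Finset.mem_powersetCard]
      exact ⟨Finset.subset_univ _, (Finset.mem_filter.mp hs).2.1⟩
    calc F.card ≤ _ := Finset.card_le_card hsub
      _ = N.choose m := by rw [Finset.card_powersetCard, Finset.card_univ]
  by_cases hcase : 1 ≤ α + 2 * δ
  · have hKN : N ≤ K := by
      have h1 : (N:ℝ) ≤ (α + 2*δ) * N := by nlinarith [Nat.cast_nonneg (α := ℝ) N]
      have h2 : (N:ℝ) ≤ (K:ℝ) := h1.trans (Nat.le_ceil _)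
      exact_mod_cast h2
    have := htriv.trans (Nat.choose_le_choose m hKN)
    exact_mod_cast this
  push_neg at hcase
  have hδhalf : δ < 1/2 := by linarith
  rcases Nat.eq_zero_or_pos m with rfl | hm1
  · have hsub : F ⊆ {∅} := by
      intro s hs
      rw [Finset.mem_singleton, ← Finset.card_eq_zero]
      exact (Finset.mem_filter.mp hs).2.1
    have h1 : F.card ≤ 1 := by
      calc F.card ≤ ({∅} : Finset (Finset V)).card := Finset.card_le_card hsub
        _ = 1 := rfl
    have h2 : (F.card : ℝ) ≤ 1 := by exact_mod_cast h1
    simpa using h2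
  rcases Finset.eq_empty_or_nonempty F with hFe | hFne
  · rw [hFe]
    simp only [Finset.card_empty, Nat.cast_zero]
    positivity
  obtain ⟨I₀, hI₀⟩ := hFne
  rw [hF, Finset.mem_filter] at hI₀
  obtain ⟨-, hI₀m, hI₀ind⟩ := hI₀
  have hm1' : (1:ℝ) ≤ m := by exact_mod_cast hm1
  have hmlt : (m:ℝ) < (α + δ) * N := by
    rcases lt_or_ge ((m:ℝ)) ((α + δ) * N) with h | h
    · exact h
    · exfalso
      have h0 := hedge I₀ (by rw [hI₀m]; exact h)
      have hpairs : ((I₀ ×ˢ I₀).filter fun p => G.Adj p.1 p.2) = ∅ := by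
        rw [Finset.filter_eq_empty_iff]
        rintro ⟨x, y⟩ hxy
        rw [Finset.mem_product] at hxy
        exact hI₀ind x hxy.1 y hxy.2
      rw [hI₀m, hpairs] at h0
      simp only [Finset.card_empty, Nat.cast_zero] at h0
      have hmp : (0:ℝ) < m := by exact_mod_cast hm1
      nlinarith [mul_pos (mul_pos hε hmp) hd0]
  have hNpos : 0 < N := by
    rcases Nat.eq_zero_or_pos N with h0 | h
    · rw [h0] at hmlt
      simp at hmlt
      linarith
    · exact h
  have hNpos' : (0:ℝ) < N := by exact_mod_cast hNpos
  haveI : Nonempty V := Fintype.card_pos_iff.mp hNpos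
  set θ : ℝ := ε * d with hθdef
  have hθpos : 0 < θ := by positivity
  set R₀ : ℝ := (α + δ) * N with hR₀def
  have hR₀pos : 0 < R₀ := lt_of_le_of_lt (by linarith) hmlt
  set R := ⌊(α + δ) * (N:ℝ)⌋₊ with hRdef
  set q := ⌊(N:ℝ) / θ⌋₊ with hqdef
  have Hθ : ∀ A : Finset V, R₀ ≤ (A.card : ℝ) →
      θ ≤ ((A.filter (G.Adj (KW.pickV G A))).card : ℝ) := by
    intro A hA
    have hApos : (0:ℝ) < A.card := lt_of_lt_of_le hR₀pos hA
    have hAne : A.Nonempty := Finset.card_pos.mp (by exact_mod_cast hApos)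
    have h1 := hedge A (le_trans (le_of_eq hR₀def.symm) hA)
    have h2 := KW.pairs_card G A
    have h3 : ∑ a ∈ A, (A.filter (G.Adj a)).card ≤
        A.card * (A.filter (G.Adj (KW.pickV G A))).card := by
      have := Finset.sum_le_card_nsmul A (fun a => (A.filter (G.Adj a)).card)
        ((A.filter (G.Adj (KW.pickV G A))).card) (fun x hx => KW.pickV_max G hAne hx)
      simpa [smul_eq_mul] using this
    have h4 : (A.card : ℝ) * θ ≤ (A.card : ℝ) * ((A.filter (G.Adj (KW.pickV G A))).card) := by
      calc (A.card : ℝ) * θ = ε * A.card * d := by rw [hθdef]; ring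
        _ ≤ (((A ×ˢ A).filter fun p => G.Adj p.1 p.2).card : ℝ) := h1
        _ = ((∑ a ∈ A, (A.filter (G.Adj a)).card : ℕ) : ℝ) := by rw [h2]
        _ ≤ ((A.card * (A.filter (G.Adj (KW.pickV G A))).card : ℕ) : ℝ) := by exact_mod_cast h3
        _ = (A.card : ℝ) * ((A.filter (G.Adj (KW.pickV G A))).card) := by push_cast; ring
    exact le_of_mul_le_mul_left h4 hApos
  have hq_prop : ∀ s : ℕ, (s:ℝ) * θ ≤ (N:ℝ) → s ≤ q := by
    intro s hs
    apply Nat.le_floor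
    rw [le_div_iff₀ hθpos]
    exact hs
  have hR_prop : ∀ s : ℕ, (s:ℝ) < R₀ → s ≤ R := by
    intro s hs
    apply Nat.le_floor
    rw [hR₀def] at hs
    exact hs.le
  have hcount := KW.count_le G R₀ hR₀pos θ hθpos Hθ m q R hq_prop hR_prop
  rw [← hF, ← hN] at hcount
  -- real-side facts
  have hKm : (α + 2*δ) * N ≤ (K:ℝ) := Nat.le_ceil _
  have hRK : (R:ℝ) ≤ (α + δ) * N := Nat.floor_le (by positivity)
  have hmR : m ≤ R := Nat.le_floor hmlt.le
  have hR1 : (1:ℝ) ≤ (R:ℝ) := by exact_mod_cast le_trans hm1 hmR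
  have hδN : (0:ℝ) ≤ δ * N := by positivity
  have hRKnat : R ≤ K := by
    have h : (R:ℝ) ≤ (K:ℝ) := by linarith
    exact_mod_cast h
  have hmK : m ≤ K := by
    have h : (m:ℝ) ≤ (K:ℝ) := by linarith
    exact_mod_cast h
  set B := (m:ℝ) / δ with hBdef
  have hBpos : 0 < B := by positivity
  set Q := (m:ℝ) / T with hQdef
  have hQpos : 0 < Q := by positivity
  have hmpos : (0:ℝ) < m := by linarith
  have hqQ : (q:ℝ) ≤ Q := by
    have h1 : (q:ℝ) ≤ (N:ℝ)/θ := Nat.floor_le (by positivity)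
    have h3 : T / ε * N ≤ (m:ℝ) * d := by
      rw [div_le_iff₀ hd0] at hm
      exact hm
    have h2 : (N:ℝ)/θ ≤ Q := by
      rw [hQdef, hθdef, div_le_div_iff₀ (by positivity) hTpos]
      calc (N:ℝ) * T = ε * (T / ε * N) := by field_simp
        _ ≤ ε * ((m:ℝ) * d) := mul_le_mul_of_nonneg_left h3 hε.le
        _ = (m:ℝ) * (ε * d) := by ring
    linarith
  have hqhalf : (q:ℝ) ≤ (m:ℝ)/2 := by
    refine hqQ.trans ?_
    rw [hQdef]
    gcongr
  have hqm : q ≤ m := by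
    have h : (q:ℝ) ≤ (m:ℝ) := by linarith
    exact_mod_cast h
  -- per-term bound
  have hterm : ∀ s, s ≤ q →
      ((q:ℝ)+1) * ((N.choose s : ℝ) * (R.choose (m - s) : ℝ)) ≤ (K.choose m : ℝ) := by
    intro s hsq
    by_cases hz : R.choose (m - s) = 0
    · rw [hz]
      simp
    set t := m - s with htdef
    have htR : t ≤ R := by
      by_contra hc
      push_neg at hc
      exact hz (Nat.choose_eq_zero_of_lt hc)
    have hsm : s ≤ m := le_trans hsq hqm
    have htcast : (t:ℝ) = (m:ℝ) - s := by
      rw [htdef, Nat.cast_sub hsm]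
    have hscast : (s:ℝ) ≤ (q:ℝ) := by exact_mod_cast hsq
    have hthalf : (m:ℝ)/2 ≤ t := by rw [htcast]; linarith
    have hqB : (q:ℝ) ≤ B := by
      rw [hBdef]
      have : (m:ℝ)/2 ≤ (m:ℝ)/δ := by
        gcongr
        linarith
      linarith
    -- numeric core
    have core : ((q:ℝ)+1) * (B^s / (Nat.factorial s : ℝ)) ≤ Real.exp (c₂ * m) := by
      have step1 : B^s / (Nat.factorial s : ℝ) ≤ B^q / (Nat.factorial q : ℝ) :=
        KWnum.pow_fact_mono B hBpos.le q hqB s hsq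
      have step2 : ((q:ℝ)+1) * (B^q / (Nat.factorial q : ℝ)) ≤ Real.exp (c₂ * m) := by
        rcases Nat.eq_zero_or_pos q with hq0 | hq1
        · rw [hq0]
          simp [Nat.factorial]
          positivity
        · have hq1' : (1:ℝ) ≤ q := by exact_mod_cast hq1
          have hqpos : (0:ℝ) < q := by linarith
          have e1 : ((q:ℝ)+1) ≤ 2^q := by
            have h := Nat.lt_two_pow_self (n := q)
            have h' : q + 1 ≤ 2^q := h
            exact_mod_cast h'
          have e2 : (2:ℝ)^q ≤ (Real.exp 1)^q := by
            apply pow_le_pow_left₀ (by norm_num)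
            linarith [Real.add_one_le_exp 1]
          have e3 : B^q / (Nat.factorial q : ℝ) ≤ (B/q)^q * Real.exp q := by
            have hfq : (q:ℝ)^q / (Nat.factorial q : ℝ) ≤ Real.exp q :=
              Real.pow_div_factorial_le_exp _ (Nat.cast_nonneg q) q
            have hfac0 : (0:ℝ) < (Nat.factorial q : ℝ) := by exact_mod_cast Nat.factorial_pos q
            have heq : B^q / (Nat.factorial q : ℝ)
                = (B/q)^q * ((q:ℝ)^q / (Nat.factorial q : ℝ)) := by
              have hqq : ((q:ℝ))^q ≠ 0 := pow_ne_zero q (ne_of_gt hqpos)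
              have heq' : (B/(q:ℝ))^q * ((q:ℝ)^q) = B^q := by
                rw [div_pow, div_mul_cancel₀ _ hqq]
              rw [← heq', mul_div_assoc]
            rw [heq]
            exact mul_le_mul_of_nonneg_left hfq (by positivity)
          have e4 : ((q:ℝ)+1) * (B^q / (Nat.factorial q : ℝ)) ≤ (Real.exp 2 * B / q)^q := by
            have expq : Real.exp (q:ℝ) = (Real.exp 1)^q := by
              rw [← Real.exp_nat_mul]
              norm_num
            calc ((q:ℝ)+1) * (B^q / (Nat.factorial q : ℝ))
                ≤ (Real.exp 1)^q * ((B/q)^q * Real.exp q) := by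
                  apply mul_le_mul (e1.trans e2) e3 (by positivity) (by positivity)
              _ = (Real.exp 1 * (B/q) * Real.exp 1)^q := by
                  rw [expq, mul_pow, mul_pow]
                  ring
              _ = (Real.exp 2 * B / q)^q := by
                  congr 1
                  rw [show (2:ℝ) = 1 + 1 by norm_num, Real.exp_add]
                  field_simp
          have hXpos : (0:ℝ) < Real.exp 2 * B / q := by positivity
          have e5 : (Real.exp 2 * B / q)^q
              = Real.exp ((q:ℝ) * Real.log (Real.exp 2 * B / q)) := by
            rw [Real.exp_nat_mul, Real.exp_log hXpos]
          have hBQ : Real.exp 2 * B / Q = Real.exp 2 * (T/δ) := by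
            rw [hBdef, hQdef]
            field_simp
          have hTδ : (1:ℝ) ≤ T/δ := by
            rw [le_div_iff₀ hδ]
            linarith
          have hlogBQ : Real.log (Real.exp 2 * B / Q) = 2 + Real.log (T/δ) := by
            rw [hBQ, Real.log_mul (Real.exp_pos 2).ne' (by positivity), Real.log_exp]
          have ht1 : 1 ≤ Real.log (Real.exp 2 * B / Q) := by
            rw [hlogBQ]
            have := Real.log_nonneg hTδ
            linarith
          have e6 : (q:ℝ) * Real.log (Real.exp 2 * B / q)
              ≤ Q * Real.log (Real.exp 2 * B / Q) :=
            KWnum.qlog_le q Q B hqpos hqQ hBpos ht1 hQpos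
          have e7 : Q * Real.log (Real.exp 2 * B / Q) ≤ c₂ * m := by
            rw [hlogBQ, hQdef]
            have hAN : 2 + Real.log (T/δ) ≤ c₂ * T := by
              have hl1 : Real.log (T * (c₂/2)) ≤ T * (c₂/2) - 1 :=
                Real.log_le_sub_one_of_pos (by positivity)
              rw [Real.log_mul hTpos.ne' (by positivity)] at hl1
              have hl2 : Real.log (T/δ) = Real.log T - Real.log δ :=
                Real.log_div hTpos.ne' hδ.ne'
              have hl3 : Real.log (1/δ) = - Real.log δ := by
                rw [one_div, Real.log_inv]
              have hl4 : Real.log (c₂/2) = - Real.log (2/c₂) := by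
                rw [Real.log_div hc₂pos.ne' (by norm_num), Real.log_div (by norm_num) hc₂pos.ne']
                ring
              have hl5 : (2/c₂) * (1 + Real.log (1/δ) + Real.log (2/c₂)) ≤ T := le_max_right _ _
              have hl6 : 1 + Real.log (1/δ) + Real.log (2/c₂) ≤ (c₂/2) * T := by
                have h := mul_le_mul_of_nonneg_left hl5 (by positivity : (0:ℝ) ≤ c₂/2)
                calc 1 + Real.log (1/δ) + Real.log (2/c₂)
                    = (c₂/2) * ((2/c₂) * (1 + Real.log (1/δ) + Real.log (2/c₂))) := by
                      field_simp
                  _ ≤ (c₂/2) * T := h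
              rw [hl2]
              linarith
            have hfin1 : (m:ℝ)/T * (2 + Real.log (T/δ)) ≤ (m:ℝ)/T * (c₂ * T) :=
              mul_le_mul_of_nonneg_left hAN (by positivity)
            have hfin2 : (m:ℝ)/T * (c₂ * T) = c₂ * m := by
              field_simp
            linarith
          calc ((q:ℝ)+1) * (B^q / (Nat.factorial q : ℝ)) ≤ (Real.exp 2 * B / q)^q := e4
            _ = Real.exp ((q:ℝ) * Real.log (Real.exp 2 * B / q)) := e5
            _ ≤ Real.exp (Q * Real.log (Real.exp 2 * B / Q)) := Real.exp_le_exp.mpr e6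
            _ ≤ Real.exp (c₂ * m) := Real.exp_le_exp.mpr e7
      calc ((q:ℝ)+1) * (B^s / (Nat.factorial s : ℝ))
          ≤ ((q:ℝ)+1) * (B^q / (Nat.factorial q : ℝ)) :=
            mul_le_mul_of_nonneg_left step1 (by positivity)
        _ ≤ Real.exp (c₂ * m) := step2
    -- ratio facts
    have hRpos' : (0:ℝ) < R := by linarith
    have hKRratio : (1 + δ₁) ≤ (K:ℝ)/(R:ℝ) := by
      rw [le_div_iff₀ hRpos']
      have k0 : δ₁ * (α + δ) ≤ δ := by
        rw [hδ₁def, div_mul_eq_mul_div, div_le_iff₀ h1δ]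
        nlinarith
      calc (1+δ₁)*(R:ℝ) ≤ (1+δ₁)*((α+δ)*N) := by
            apply mul_le_mul_of_nonneg_left hRK (by linarith)
        _ = (α+δ)*N + (δ₁*(α+δ))*N := by ring
        _ ≤ (α+δ)*N + δ*N := by nlinarith [mul_le_mul_of_nonneg_right k0 hNpos'.le]
        _ = (α+2*δ)*N := by ring
        _ ≤ K := hKm
    have hFexp : Real.exp (c₂ * m) ≤ ((K:ℝ)/(R:ℝ))^t := by
      have f1 : Real.exp (c₂ * m) ≤ (1+δ₁)^t := by
        have hpow : (1+δ₁)^t = Real.exp ((t:ℝ) * Real.log (1+δ₁)) := by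
          rw [Real.exp_nat_mul, Real.exp_log (by linarith)]
        rw [hpow]
        apply Real.exp_le_exp.mpr
        rw [hc₂def]
        nlinarith
      exact f1.trans (pow_le_pow_left₀ (by linarith) hKRratio t)
    have hδNm : δ * N ≤ (K:ℝ) - m + 1 := by
      have h := hmlt.le
      linarith
    have hNfact : ((N:ℝ))^s = B^s * ((δ*N/m))^s := by
      rw [← mul_pow]
      congr 1
      rw [hBdef]
      field_simp
    have hE : ((δ*(N:ℝ))/m)^s ≤ (((K:ℝ) - m + 1)/m)^s := by
      gcongr
    have hchA : (N.choose s : ℝ) ≤ (N:ℝ)^s / (Nat.factorial s : ℝ) := Nat.choose_le_pow_div s N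
    have hG := KWnum.choose_shift K m hmK s hsm
    have hH := KWnum.choose_base K R hRKnat t htR
    have hRt0 : (0:ℝ) ≤ (R.choose t : ℝ) := Nat.cast_nonneg _
    have hKm1pos : (0:ℝ) < (K:ℝ) - m + 1 := by
      have : (0:ℝ) < δ * N := by positivity
      linarith
    calc ((q:ℝ)+1) * ((N.choose s : ℝ) * (R.choose (m - s) : ℝ))
        ≤ ((q:ℝ)+1) * (((N:ℝ)^s / (Nat.factorial s : ℝ)) * (R.choose t : ℝ)) := by
          apply mul_le_mul_of_nonneg_left _ (by positivity)
          rw [← htdef]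
          exact mul_le_mul_of_nonneg_right hchA hRt0
      _ = (((q:ℝ)+1) * (B^s / (Nat.factorial s : ℝ))) * (((δ*(N:ℝ))/m)^s) * (R.choose t : ℝ) := by
          rw [hNfact]
          ring
      _ ≤ Real.exp (c₂*m) * (((δ*(N:ℝ))/m)^s) * (R.choose t : ℝ) := by
          apply mul_le_mul_of_nonneg_right _ hRt0
          apply mul_le_mul_of_nonneg_right core (by positivity)
      _ ≤ ((K:ℝ)/(R:ℝ))^t * ((((K:ℝ) - m + 1)/m)^s) * (R.choose t : ℝ) := by
          apply mul_le_mul_of_nonneg_right _ hRt0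
          apply mul_le_mul hFexp hE (by positivity) (by positivity)
      _ = ((R.choose t : ℝ) * ((K:ℝ)/(R:ℝ))^t) * ((((K:ℝ) - m + 1)/m)^s) := by ring
      _ ≤ (K.choose t : ℝ) * ((((K:ℝ) - m + 1)/m)^s) := by
          apply mul_le_mul_of_nonneg_right hH (by positivity)
      _ = (K.choose (m - s) : ℝ) * ((((K:ℝ) - m + 1)/m)^s) := by rw [htdef]
      _ ≤ (K.choose m : ℝ) := hG
  -- sum up
  have hsum : (F.card : ℝ) ≤
      ∑ s ∈ Finset.range (q+1), ((N.choose s : ℝ) * (R.choose (m-s) : ℝ)) := by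
    calc (F.card : ℝ)
        ≤ ((∑ s ∈ Finset.range (q+1), N.choose s * R.choose (m-s) : ℕ) : ℝ) := by
          exact_mod_cast hcount
      _ = ∑ s ∈ Finset.range (q+1), ((N.choose s : ℝ) * (R.choose (m-s) : ℝ)) := by
          push_cast
          rfl
  have hfinal : ∑ s ∈ Finset.range (q+1), ((N.choose s : ℝ) * (R.choose (m-s) : ℝ))
      ≤ (K.choose m : ℝ) := by
    have hbound : ∀ s ∈ Finset.range (q+1),
        ((N.choose s : ℝ) * (R.choose (m-s) : ℝ)) ≤ (K.choose m : ℝ)/((q:ℝ)+1) := by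
      intro s hs
      rw [le_div_iff₀ (by positivity)]
      have h := hterm s (Nat.lt_succ_iff.mp (Finset.mem_range.mp hs))
      linarith
    calc ∑ s ∈ Finset.range (q+1), ((N.choose s : ℝ) * (R.choose (m-s) : ℝ))
        ≤ ∑ _s ∈ Finset.range (q+1), (K.choose m : ℝ)/((q:ℝ)+1) :=
          Finset.sum_le_sum hbound
      _ = (K.choose m : ℝ) := by
          rw [Finset.sum_const, Finset.card_range, nsmul_eq_mul]
          push_cast
          field_simp
  linarith
end

section
/- Let 𝒢 be a d-regular simple graph on n vertices and let λ(𝒢) denote the smallest eigenvalue of its adjacency matrix. Then for every set A of vertices of 𝒢, 2·e(𝒢[A]) ≥ (d/n)·|A|² + (λ(𝒢)/n)·|A|·(n − |A|), where e(𝒢[A]) is the number of edges of 𝒢 with both endpoints in A. -/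
open Matrix Finset

lemma rayleigh_min {n : Type} [Fintype n] [DecidableEq n] {M : Matrix n n ℝ}
    (hM : M.IsHermitian) (lam : ℝ) (hmin : ∀ i, lam ≤ hM.eigenvalues i) (y : n → ℝ) :
    lam * (y ⬝ᵥ y) ≤ y ⬝ᵥ (M *ᵥ y) := by
  set U : Matrix n n ℝ := (hM.eigenvectorUnitary : Matrix n n ℝ) with hU
  have hstar : star U = Uᵀ := by
    rw [Matrix.star_eq_conjTranspose]
    ext i j
    simp [Matrix.conjTranspose_apply]
  set z : n → ℝ := Uᵀ *ᵥ y with hz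
  have hzv : z = Matrix.vecMul y U := by rw [hz, Matrix.mulVec_transpose]
  have hUU : U * star U = 1 := Matrix.mem_unitaryGroup_iff.mp hM.eigenvectorUnitary.2
  have h2 : y ⬝ᵥ y = z ⬝ᵥ z := by
    conv_lhs => rw [show y ⬝ᵥ y = y ⬝ᵥ ((U * star U) *ᵥ y) by rw [hUU, Matrix.one_mulVec]]
    rw [hstar, ← Matrix.mulVec_mulVec, Matrix.dotProduct_mulVec, ← hzv]
  have h1 : y ⬝ᵥ (M *ᵥ y) = z ⬝ᵥ (Matrix.diagonal hM.eigenvalues *ᵥ z) := by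
    conv_lhs => rw [hM.spectral_theorem, Unitary.conjStarAlgAut_apply]
    rw [hstar, ← Matrix.mulVec_mulVec, ← Matrix.mulVec_mulVec, Matrix.dotProduct_mulVec, ← hzv,
      ← hz]
    congr 1
  rw [h1, h2]
  have : z ⬝ᵥ (Matrix.diagonal hM.eigenvalues *ᵥ z) = ∑ i, hM.eigenvalues i * (z i * z i) := by
    simp [dotProduct, Matrix.mulVec_diagonal]
    exact Finset.sum_congr rfl fun i _ => by ring
  rw [this, show z ⬝ᵥ z = ∑ i, z i * z i from rfl, Finset.mul_sum]
  exact Finset.sum_le_sum fun i _ => mul_le_mul_of_nonneg_right (hmin i) (mul_self_nonneg _)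

theorem stmt_5 (V : Type) [Fintype V] [DecidableEq V]
    (G : SimpleGraph V) [DecidableRel G.Adj] (d : ℕ)
    (hreg : G.IsRegularOfDegree d)
    (lam : ℝ) (hmem : lam ∈ spectrum ℝ (G.adjMatrix ℝ))
    (hmin : ∀ x ∈ spectrum ℝ (G.adjMatrix ℝ), lam ≤ x)
    (A : Finset V) :
    -- `2·e(𝒢[A])` is the number of ordered adjacent pairs with both ends in `A`
    (d : ℝ) / (Fintype.card V : ℝ) * (A.card : ℝ) ^ 2 +
        lam / (Fintype.card V : ℝ) * (A.card : ℝ) * ((Fintype.card V : ℝ) - (A.card : ℝ)) ≤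
      (((A ×ˢ A).filter fun p => G.Adj p.1 p.2).card : ℝ) := by
  classical
  set M : Matrix V V ℝ := G.adjMatrix ℝ with hMdef
  have hsym : Mᵀ = M := G.isSymm_adjMatrix
  have hM : M.IsHermitian := by
    rw [Matrix.IsHermitian]
    ext i j
    simp only [Matrix.conjTranspose_apply, star_trivial]
    exact congrFun (congrFun hsym i) j
  have hne : Nonempty V := by
    by_contra h
    rw [not_nonempty_iff] at h
    exact (spectrum.mem_iff.mp hmem) (isUnit_of_subsingleton _)
  have hn : (0:ℝ) < (Fintype.card V : ℝ) := by
    exact_mod_cast Fintype.card_pos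
  have hn' : (Fintype.card V : ℝ) ≠ 0 := ne_of_gt hn
  have hmin' : ∀ i, lam ≤ hM.eigenvalues i := fun i =>
    hmin _ (hM.eigenvalues_mem_spectrum_real i)
  set x : V → ℝ := fun v => if v ∈ A then 1 else 0 with hx
  set o : V → ℝ := fun _ => 1 with ho
  set c : ℝ := (A.card : ℝ) / (Fintype.card V : ℝ) with hc
  set y : V → ℝ := x - c • o with hy
  have hMo : M *ᵥ o = fun _ => (d:ℝ) := by
    funext v
    show (M *ᵥ Function.const V (1:ℝ)) v = (d:ℝ)
    rw [hMdef, SimpleGraph.adjMatrix_mulVec_const_apply_of_regular hreg, mul_one]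
  have hox : o ⬝ᵥ x = (A.card : ℝ) := by
    simp [dotProduct, hx, ho]
  have hxo : x ⬝ᵥ o = (A.card : ℝ) := by
    simp [dotProduct, hx, ho]
  have hxx : x ⬝ᵥ x = (A.card : ℝ) := by
    have : x ⬝ᵥ x = o ⬝ᵥ x :=
      Finset.sum_congr rfl fun v _ => by by_cases h : v ∈ A <;> simp [hx, ho, h]
    rw [this, hox]
  have hoo : o ⬝ᵥ o = (Fintype.card V : ℝ) := by
    simp [dotProduct, ho]
  have hdx : (fun _ : V => (d:ℝ)) ⬝ᵥ x = (d:ℝ) * A.card := by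
    rw [show ((fun _ : V => (d:ℝ)) ⬝ᵥ x) = (d:ℝ) * (o ⬝ᵥ x) by
      simp [dotProduct, ho, Finset.mul_sum], hox]
  have hxd : x ⬝ᵥ (fun _ : V => (d:ℝ)) = (d:ℝ) * A.card := by
    rw [show (x ⬝ᵥ (fun _ : V => (d:ℝ))) = (d:ℝ) * (x ⬝ᵥ o) by
      simp [dotProduct, ho, Finset.mul_sum]; exact Finset.sum_congr rfl fun v _ => by ring,
      hxo]
  have hoMx : o ⬝ᵥ (M *ᵥ x) = (d:ℝ) * A.card := by
    rw [Matrix.dotProduct_mulVec, ← Matrix.mulVec_transpose, hsym, hMo, hdx]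
  have hxMo : x ⬝ᵥ (M *ᵥ o) = (d:ℝ) * A.card := by
    rw [hMo, hxd]
  have hoMo : o ⬝ᵥ (M *ᵥ o) = (d:ℝ) * (Fintype.card V : ℝ) := by
    rw [hMo]
    simp [dotProduct, ho, mul_comm]
  have hcount : x ⬝ᵥ (M *ᵥ x) = (((A ×ˢ A).filter fun p => G.Adj p.1 p.2).card : ℝ) := by
    rw [hMdef, SimpleGraph.dotProduct_mulVec_adjMatrix]
    rw [Finset.card_filter]
    push_cast
    rw [Finset.sum_product]
    simp only [show ∀ i j : V, (if G.Adj i j then x i * x j else 0)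
        = if i ∈ A then (if j ∈ A then (if G.Adj i j then (1:ℝ) else 0) else 0) else 0
      from fun i j => by simp only [hx]; split_ifs <;> norm_num]
    trans (∑ i : V, if i ∈ A then
        (∑ j : V, if j ∈ A then (if G.Adj i j then (1:ℝ) else 0) else 0) else 0)
    · exact Finset.sum_congr rfl fun i _ => by by_cases h : i ∈ A <;> simp [h]
    · rw [Finset.sum_ite_mem, Finset.univ_inter]
      exact Finset.sum_congr rfl fun i _ => by rw [Finset.sum_ite_mem, Finset.univ_inter]
  have key := rayleigh_min hM lam hmin' y
  have e1 : y ⬝ᵥ y = (A.card:ℝ) - c * A.card := by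
    rw [hy]
    rw [sub_dotProduct, dotProduct_sub, dotProduct_sub,
      smul_dotProduct, smul_dotProduct, dotProduct_smul,
      dotProduct_smul, hxx, hxo, hox, hoo]
    simp only [smul_eq_mul]
    rw [hc]
    field_simp
    ring
  have e2 : y ⬝ᵥ (M *ᵥ y) = x ⬝ᵥ (M *ᵥ x) - (d:ℝ) * (c * A.card) := by
    rw [hy, Matrix.mulVec_sub, Matrix.mulVec_smul]
    rw [sub_dotProduct, dotProduct_sub, dotProduct_sub,
      smul_dotProduct, smul_dotProduct, dotProduct_smul,
      dotProduct_smul, hoMx, hxMo, hoMo]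
    simp only [smul_eq_mul]
    rw [hc]
    field_simp
    ring
  rw [e1, e2, hcount] at key
  have g1 : (d : ℝ) / (Fintype.card V : ℝ) * (A.card : ℝ) ^ 2 = (d:ℝ) * (c * A.card) := by
    rw [hc]; ring
  have g2 : lam / (Fintype.card V : ℝ) * (A.card : ℝ)
      * ((Fintype.card V : ℝ) - (A.card : ℝ)) = lam * ((A.card:ℝ) - c * A.card) := by
    rw [hc]; field_simp
  rw [g1, g2]
  linarith [key]
end

section
/- Let n ≥ m ≥ 1 be integers, set p = m/n, let X be an n-element set and let 𝒬 be any family of subsets of X. Then the number of sets A ∈ 𝒬 with |A| = m, divided by binom(n,m), is at most 3·√m times the sum over all A ∈ 𝒬 of p^{|A|}·(1−p)^{n−|A|}. (In probabilistic language: the probability that a uniformly random m-subset of X lies in 𝒬 is at most 3√m times the probability that a p-random subset of X lies in 𝒬.) -/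
open Real Filter

private lemma aux_sqrt_pi_le_stirling (k : ℕ) (hk : 1 ≤ k) :
    Real.sqrt π ≤ Stirling.stirlingSeq k := by
  obtain ⟨j, rfl⟩ := Nat.exists_eq_add_of_le hk
  have ht : Tendsto (Stirling.stirlingSeq ∘ Nat.succ) atTop (nhds (Real.sqrt π)) := by
    rw [show (Stirling.stirlingSeq ∘ Nat.succ) = fun n => Stirling.stirlingSeq (n + 1) from rfl]
    exact (Filter.tendsto_add_atTop_iff_nat 1).2 Stirling.tendsto_stirlingSeq_sqrt_pi
  simpa [Nat.succ_eq_add_one, Nat.add_comm] using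
    Stirling.stirlingSeq'_antitone.le_of_tendsto ht j

private lemma aux_stirling_le (k : ℕ) (hk : 1 ≤ k) :
    Stirling.stirlingSeq k ≤ Real.exp 1 / Real.sqrt 2 := by
  obtain ⟨j, rfl⟩ := Nat.exists_eq_add_of_le hk
  have := Stirling.stirlingSeq'_antitone (Nat.zero_le j)
  simpa [Function.comp, Nat.succ_eq_add_one, Nat.add_comm, Stirling.stirlingSeq_one] using this

private lemma aux_fact_lb (k : ℕ) (hk : 1 ≤ k) :
    Real.sqrt π * (Real.sqrt (2 * k) * ((k : ℝ) / Real.exp 1) ^ k) ≤ (k.factorial : ℝ) := by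
  have hden : 0 < Real.sqrt (2 * k) * ((k : ℝ) / Real.exp 1) ^ k := by
    have hk0 : (0:ℝ) < k := by exact_mod_cast hk
    positivity
  have h := aux_sqrt_pi_le_stirling k hk
  rw [Stirling.stirlingSeq, le_div_iff₀ hden] at h
  linarith [h]

private lemma aux_fact_ub (k : ℕ) (hk : 1 ≤ k) :
    (k.factorial : ℝ) ≤ (Real.exp 1 / Real.sqrt 2) * (Real.sqrt (2 * k) * ((k : ℝ) / Real.exp 1) ^ k) := by
  have hden : 0 < Real.sqrt (2 * k) * ((k : ℝ) / Real.exp 1) ^ k := by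
    have hk0 : (0:ℝ) < k := by exact_mod_cast hk
    positivity
  have h := aux_stirling_le k hk
  rw [Stirling.stirlingSeq, div_le_iff₀ hden] at h
  linarith [h]

private lemma aux_sqrt_helper (a x : ℝ) (ha : 0 ≤ a) :
    a * Real.sqrt x = Real.sqrt (a ^ 2 * x) := by
  rw [Real.sqrt_mul (sq_nonneg a), Real.sqrt_sq ha]

set_option maxHeartbeats 1000000 in
private lemma aux_key (m q : ℕ) (hm : 1 ≤ m) (hq : 1 ≤ q) :
    1 ≤ 3 * Real.sqrt m * (((m + q).choose m : ℝ)) *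
      (((m : ℝ) / (m + q)) ^ m * ((q : ℝ) / (m + q)) ^ q) := by
  set n : ℕ := m + q with hn
  have hm0 : (0:ℝ) < m := by exact_mod_cast hm
  have hq0 : (0:ℝ) < q := by exact_mod_cast hq
  have hn0 : (0:ℝ) < n := by push_cast [hn]; linarith
  have he : (0:ℝ) < Real.exp 1 := Real.exp_pos 1
  have hC : ((n.choose m : ℝ)) = (n.factorial : ℝ) / ((m.factorial : ℝ) * (q.factorial : ℝ)) := by
    rw [Nat.cast_choose ℝ (Nat.le_add_right m q : m ≤ n)]
    congr 3
    simp [hn]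
  -- lower bound on the binomial coefficient
  have hden_pos : (0:ℝ) < (Real.exp 1 / Real.sqrt 2) * (Real.sqrt (2 * m) * ((m:ℝ)/Real.exp 1)^m)
      * ((Real.exp 1 / Real.sqrt 2) * (Real.sqrt (2 * q) * ((q:ℝ)/Real.exp 1)^q)) := by
    positivity
  have hClb : Real.sqrt π * (Real.sqrt (2 * n) * ((n:ℝ)/Real.exp 1)^n) /
      ((Real.exp 1 / Real.sqrt 2) * (Real.sqrt (2 * m) * ((m:ℝ)/Real.exp 1)^m)
        * ((Real.exp 1 / Real.sqrt 2) * (Real.sqrt (2 * q) * ((q:ℝ)/Real.exp 1)^q)))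
      ≤ ((n.choose m : ℝ)) := by
    rw [hC]
    apply div_le_div₀ (by positivity) (aux_fact_lb n (by omega)) (by positivity)
    exact mul_le_mul (aux_fact_ub m hm) (aux_fact_ub q hq) (by positivity) (by positivity)
  -- key cancellation identity
  have hPn : ((n:ℝ)/Real.exp 1)^n * (((m : ℝ) / n) ^ m * ((q : ℝ) / n) ^ q)
      = ((m:ℝ)/Real.exp 1)^m * ((q:ℝ)/Real.exp 1)^q := by
    have h1 : ((n:ℝ)/Real.exp 1) * ((m:ℝ)/n) = (m:ℝ)/Real.exp 1 := by
      field_simp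
    have h2 : ((n:ℝ)/Real.exp 1) * ((q:ℝ)/n) = (q:ℝ)/Real.exp 1 := by
      field_simp
    have hpowsplit : ((n:ℝ)/Real.exp 1)^n = ((n:ℝ)/Real.exp 1)^m * ((n:ℝ)/Real.exp 1)^q := by
      rw [← pow_add]
    rw [hpowsplit, ← h1, ← h2, mul_pow, mul_pow]; ring
  set e1 : ℝ := Real.exp 1 with he1
  set Pm : ℝ := ((m:ℝ)/e1)^m with hPmdef
  set Pq : ℝ := ((q:ℝ)/e1)^q with hPqdef
  have hPm0 : 0 < Pm := by rw [hPmdef]; positivity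
  have hPq0 : 0 < Pq := by rw [hPqdef]; positivity
  -- core scalar inequality
  have hs2 : Real.sqrt 2 ^ 2 = 2 := Real.sq_sqrt (by norm_num)
  have hdivsq : (e1 / Real.sqrt 2)^2 = e1 ^ 2 / 2 := by
    rw [div_pow, hs2]
  have hcore : (e1 / Real.sqrt 2)^2 * (Real.sqrt (2*(m:ℝ)) * Real.sqrt (2*(q:ℝ)))
      ≤ 3 * Real.sqrt m * (Real.sqrt π * Real.sqrt (2*(n:ℝ))) := by
    have s1 : Real.sqrt (2*(m:ℝ)) ^ 2 = 2*(m:ℝ) := Real.sq_sqrt (by positivity)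
    have s2 : Real.sqrt (2*(q:ℝ)) ^ 2 = 2*(q:ℝ) := Real.sq_sqrt (by positivity)
    have s3 : Real.sqrt (2*(n:ℝ)) ^ 2 = 2*(n:ℝ) := Real.sq_sqrt (by positivity)
    have spi : Real.sqrt π ^ 2 = π := Real.sq_sqrt Real.pi_pos.le
    have sm : Real.sqrt (m:ℝ) ^ 2 = (m:ℝ) := Real.sq_sqrt hm0.le
    have hLnn : 0 ≤ (e1 / Real.sqrt 2)^2 * (Real.sqrt (2*(m:ℝ)) * Real.sqrt (2*(q:ℝ))) := by
      positivity
    have hRnn : 0 ≤ 3 * Real.sqrt m * (Real.sqrt π * Real.sqrt (2*(n:ℝ))) := by positivity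
    have hLsq : ((e1 / Real.sqrt 2)^2 * (Real.sqrt (2*(m:ℝ)) * Real.sqrt (2*(q:ℝ))))^2
        = e1^4 * (m:ℝ) * (q:ℝ) := by
      rw [hdivsq]
      have : (e1^2/2 * (Real.sqrt (2*(m:ℝ)) * Real.sqrt (2*(q:ℝ))))^2
          = e1^4/4 * (Real.sqrt (2*(m:ℝ))^2 * Real.sqrt (2*(q:ℝ))^2) := by ring
      rw [this, s1, s2]; ring
    have hRsq : (3 * Real.sqrt m * (Real.sqrt π * Real.sqrt (2*(n:ℝ))))^2
        = 18 * π * (m:ℝ) * (n:ℝ) := by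
      have : (3 * Real.sqrt (m:ℝ) * (Real.sqrt π * Real.sqrt (2*(n:ℝ))))^2
          = 9 * (Real.sqrt (m:ℝ)^2 * (Real.sqrt π^2 * Real.sqrt (2*(n:ℝ))^2)) := by ring
      rw [this, sm, spi, s3]; ring
    have he2 : e1 ^ 2 ≤ 7.38906 := by
      rw [he1]; nlinarith [Real.exp_one_lt_d9, Real.exp_pos 1]
    have he4 : e1 ^ 4 ≤ 54.6 := by
      have h0 : (0:ℝ) ≤ e1 ^ 2 := sq_nonneg e1
      nlinarith [he2, h0]
    have hqn : (q:ℝ) ≤ (n:ℝ) := by push_cast [hn]; linarith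
    have hpi : (3.14:ℝ) < π := Real.pi_gt_d2
    have hsqle : ((e1 / Real.sqrt 2)^2 * (Real.sqrt (2*(m:ℝ)) * Real.sqrt (2*(q:ℝ))))^2
        ≤ (3 * Real.sqrt m * (Real.sqrt π * Real.sqrt (2*(n:ℝ))))^2 := by
      rw [hLsq, hRsq]
      have h546 : e1 ^ 4 * (q:ℝ) ≤ 54.6 * (n:ℝ) := by
        calc e1 ^ 4 * (q:ℝ) ≤ 54.6 * (q:ℝ) := mul_le_mul_of_nonneg_right he4 hq0.le
          _ ≤ 54.6 * (n:ℝ) := by nlinarith [hqn]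
      nlinarith [mul_le_mul_of_nonneg_left h546 hm0.le, mul_nonneg hm0.le hn0.le]
    calc (e1 / Real.sqrt 2)^2 * (Real.sqrt (2*(m:ℝ)) * Real.sqrt (2*(q:ℝ)))
        = Real.sqrt (((e1 / Real.sqrt 2)^2 * (Real.sqrt (2*(m:ℝ)) * Real.sqrt (2*(q:ℝ))))^2) :=
          (Real.sqrt_sq hLnn).symm
      _ ≤ Real.sqrt ((3 * Real.sqrt m * (Real.sqrt π * Real.sqrt (2*(n:ℝ))))^2) :=
          Real.sqrt_le_sqrt hsqle
      _ = 3 * Real.sqrt m * (Real.sqrt π * Real.sqrt (2*(n:ℝ))) := Real.sqrt_sq hRnn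
  -- put it together
  set D : ℝ := (e1 / Real.sqrt 2) * (Real.sqrt (2 * (m:ℝ)) * Pm)
      * ((e1 / Real.sqrt 2) * (Real.sqrt (2 * (q:ℝ)) * Pq)) with hDdef
  set N : ℝ := Real.sqrt π * (Real.sqrt (2 * (n:ℝ)) * ((n:ℝ)/e1)^n) with hNdef
  set R : ℝ := ((m : ℝ) / n) ^ m * ((q : ℝ) / n) ^ q with hRdef
  have hD0 : 0 < D := by rw [hDdef]; positivity
  have hR0 : 0 < R := by rw [hRdef]; positivity
  have hfrac : 1 ≤ 3 * Real.sqrt m * (N / D) * R := by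
    have hXeq : 3 * Real.sqrt m * N * R
        = 3 * Real.sqrt m * (Real.sqrt π * Real.sqrt (2*(n:ℝ))) * (Pm * Pq) := by
      rw [hNdef, hRdef, hPmdef, hPqdef] at *
      linear_combination (3 * Real.sqrt (m:ℝ) * (Real.sqrt π * Real.sqrt (2*(n:ℝ)))) * hPn
    have hDeq : D = (e1 / Real.sqrt 2)^2 * (Real.sqrt (2*(m:ℝ)) * Real.sqrt (2*(q:ℝ)))
        * (Pm * Pq) := by rw [hDdef]; ring
    have hDle : D ≤ 3 * Real.sqrt m * N * R := by
      rw [hXeq, hDeq]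
      exact mul_le_mul_of_nonneg_right hcore (by positivity)
    have : 3 * Real.sqrt m * (N / D) * R = (3 * Real.sqrt m * N * R) / D := by ring
    rw [this, le_div_iff₀ hD0, one_mul]
    exact hDle
  have hClb' : N / D ≤ ((n.choose m : ℝ)) := by
    rw [hNdef, hDdef]
    exact hClb
  calc (1:ℝ) ≤ 3 * Real.sqrt m * (N / D) * R := hfrac
    _ ≤ 3 * Real.sqrt m * ((n.choose m : ℝ)) * R := by
        apply mul_le_mul_of_nonneg_right _ hR0.le
        exact mul_le_mul_of_nonneg_left hClb' (by positivity)
    _ = 3 * Real.sqrt m * ((n.choose m : ℝ)) * (((m : ℝ) / (m + q)) ^ m * ((q : ℝ) / (m + q)) ^ q) := by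
        have : ((m:ℝ) + q) = ((n:ℝ)) := by push_cast [hn]; ring
        rw [hRdef, ← this]

theorem stmt_8 (n m : ℕ) (hm : 1 ≤ m) (hmn : m ≤ n)
    (X : Type) [Fintype X] [DecidableEq X] (hX : Fintype.card X = n)
    (Q : Finset (Finset X)) :
    ((Q.filter fun A => A.card = m).card : ℝ) / (n.choose m : ℝ) ≤
      3 * Real.sqrt (m : ℝ) *
        ∑ A ∈ Q, ((m : ℝ) / (n : ℝ)) ^ A.card * (1 - (m : ℝ) / (n : ℝ)) ^ (n - A.card) := by
  have hn1 : 1 ≤ n := le_trans hm hmn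
  have hn0 : (0:ℝ) < n := by exact_mod_cast hn1
  have hm0 : (0:ℝ) < m := by exact_mod_cast hm
  set p : ℝ := (m:ℝ)/n with hp
  have hp0 : 0 ≤ p := by positivity
  have hp1 : p ≤ 1 := by rw [hp, div_le_one hn0]; exact_mod_cast hmn
  have hterm : ∀ A : Finset X, 0 ≤ p ^ A.card * (1 - p) ^ (n - A.card) := by
    intro A
    have : 0 ≤ 1 - p := by linarith
    positivity
  -- the key inequality: 1 ≤ 3√m · C(n,m) · p^m (1-p)^(n-m)
  have hkey : 1 ≤ 3 * Real.sqrt m * (n.choose m : ℝ) * (p ^ m * (1 - p) ^ (n - m)) := by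
    rcases eq_or_lt_of_le hmn with heq | hlt
    · subst heq
      have hp' : p = 1 := by rw [hp]; field_simp
      have hsq : (1:ℝ) ≤ Real.sqrt m := by
        rw [show (1:ℝ) = Real.sqrt 1 from (Real.sqrt_one).symm]
        exact Real.sqrt_le_sqrt (by exact_mod_cast hm)
      simp [hp', Nat.choose_self]
      linarith
    · set q : ℕ := n - m with hqdef
      have hq : 1 ≤ q := by omega
      have hnmq : n = m + q := by omega
      have h1p : 1 - p = (q:ℝ)/n := by
        rw [hp]
        have : (n:ℝ) = (m:ℝ) + q := by rw [hnmq]; push_cast; ring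
        field_simp [this]
        linarith
      have := aux_key m q hm hq
      rw [← hnmq] at this
      have hcastn : ((m:ℝ) + q) = (n:ℝ) := by rw [hnmq]; push_cast; ring
      rw [h1p, hp]
      calc (1:ℝ) ≤ 3 * Real.sqrt m * ((n.choose m : ℝ)) *
            (((m : ℝ) / ((m:ℝ)+q)) ^ m * ((q : ℝ) / ((m:ℝ)+q)) ^ q) := by
            convert this using 4
        _ = 3 * Real.sqrt m * (n.choose m : ℝ) * (((m:ℝ)/n) ^ m * ((q:ℝ)/n) ^ q) := by
            rw [hcastn]
  -- reduce the sum to the filtered sum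
  have hsum_ge : ((Q.filter fun A => A.card = m).card : ℝ) * (p ^ m * (1 - p) ^ (n - m)) ≤
      ∑ A ∈ Q, p ^ A.card * (1 - p) ^ (n - A.card) := by
    have h1 : ∑ A ∈ Q.filter (fun A => A.card = m), p ^ A.card * (1 - p) ^ (n - A.card)
        = ((Q.filter fun A => A.card = m).card : ℝ) * (p ^ m * (1 - p) ^ (n - m)) := by
      rw [Finset.sum_congr rfl (fun A hA => by
        rw [(Finset.mem_filter.1 hA).2]), Finset.sum_const, nsmul_eq_mul]
    rw [← h1]
    exact Finset.sum_le_sum_of_subset_of_nonneg (Finset.filter_subset _ _)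
      (fun A _ _ => hterm A)
  have hC0 : (0:ℝ) < (n.choose m : ℝ) := by
    exact_mod_cast Nat.choose_pos hmn
  have hNnn : (0:ℝ) ≤ ((Q.filter fun A => A.card = m).card : ℝ) := by positivity
  rw [div_le_iff₀ hC0]
  calc ((Q.filter fun A => A.card = m).card : ℝ)
      = ((Q.filter fun A => A.card = m).card : ℝ) * 1 := by ring
    _ ≤ ((Q.filter fun A => A.card = m).card : ℝ) *
        (3 * Real.sqrt m * (n.choose m : ℝ) * (p ^ m * (1 - p) ^ (n - m))) :=
        mul_le_mul_of_nonneg_left hkey hNnn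
    _ = 3 * Real.sqrt m *
        (((Q.filter fun A => A.card = m).card : ℝ) * (p ^ m * (1 - p) ^ (n - m)))
        * (n.choose m : ℝ) := by ring
    _ ≤ 3 * Real.sqrt m * (∑ A ∈ Q, p ^ A.card * (1 - p) ^ (n - A.card))
        * (n.choose m : ℝ) := by
        apply mul_le_mul_of_nonneg_right _ hC0.le
        apply mul_le_mul_of_nonneg_left hsum_ge (by positivity)
end

section
/- Let G be a finite abelian group of odd order n, let H be a subgroup of G of index q, and let B ⊆ G be a union of cosets of H such that B ∪ (B + B) = G, where B + B = {b + b' : b, b' ∈ B}. Then for every x ∈ G∖B, the number of unordered pairs {y, z} of distinct elements of B with x = y + z is at least n/(2q) − 1/2. -/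
theorem stmt_11 (G : Type) [AddCommGroup G] [Fintype G] [DecidableEq G]
    (n q : ℕ) (hn : Fintype.card G = n) (hodd : Odd n)
    (H : AddSubgroup G) (hq : H.index = q)
    (B : Set G)
    (hcosets : ∀ b ∈ B, ∀ h ∈ H, b + h ∈ B)
    (hcover : ∀ x : G, x ∈ B ∨ ∃ y ∈ B, ∃ z ∈ B, y + z = x)
    (x : G) (hx : x ∉ B) :
    (n : ℝ) / (2 * (q : ℝ)) - 1 / 2 ≤
      (({p : Finset G | p.card = 2 ∧ (↑p : Set G) ⊆ B ∧
          ∃ y z : G, y ≠ z ∧ p = {y, z} ∧ y + z = x} : Set (Finset G)).ncard : ℝ) := by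
  classical
  -- doubling is injective since |G| is odd
  have hdbl : ∀ a b : G, a + a = b + b → a = b := by
    intro a b hab
    have h2 : (2 : ℕ) • (a - b) = 0 := by
      rw [two_nsmul, sub_add_sub_comm, hab, sub_self]
    have hd2 : addOrderOf (a - b) ∣ 2 := addOrderOf_dvd_of_nsmul_eq_zero h2
    have hdn : addOrderOf (a - b) ∣ n := hn ▸ addOrderOf_dvd_card
    have h1 : addOrderOf (a - b) ∣ Nat.gcd 2 n := Nat.dvd_gcd hd2 hdn
    rw [Nat.Coprime.gcd_eq_one hodd.coprime_two_left, Nat.dvd_one] at h1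
    exact sub_eq_zero.mp (AddMonoid.addOrderOf_eq_one_iff.mp h1)
  obtain hxB | ⟨y, hy, z, hz, hyz⟩ := hcover x
  · exact absurd hxB hx
  set S : Set (Finset G) := {p : Finset G | p.card = 2 ∧ (↑p : Set G) ⊆ B ∧
      ∃ y z : G, y ≠ z ∧ p = {y, z} ∧ y + z = x} with hS
  set K : Finset G := (H : Set G).toFinset with hKdef
  have hmemK : ∀ h, h ∈ K ↔ h ∈ H := fun h => Set.mem_toFinset
  set f : G → Finset G := fun h => {y + h, z - h} with hf
  set K' : Finset G := K.filter (fun h => y + h ≠ z - h) with hK'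
  -- at most one bad h
  have hbad : (K.filter (fun h => ¬ y + h ≠ z - h)).card ≤ 1 := by
    rw [Finset.card_le_one]
    intro a ha b hb
    simp only [Finset.mem_filter, not_not] at ha hb
    have e1 : y + a + a = z := by rw [ha.2]; abel
    have e2 : y + b + b = z := by rw [hb.2]; abel
    have e3 : y + (a + a) = y + (b + b) := by
      rw [← add_assoc, ← add_assoc]; exact e1.trans e2.symm
    exact hdbl a b (add_left_cancel e3)
  have hKcard : K.card ≤ K'.card + 1 := by
    have := Finset.card_filter_add_card_filter_not (s := K)
      (p := fun h => y + h ≠ z - h)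
    rw [hK']
    omega
  -- image lands in S
  have hsubS : (↑(K'.image f) : Set (Finset G)) ⊆ S := by
    intro p hp
    simp only [Finset.coe_image, Set.mem_image, Finset.mem_coe] at hp
    obtain ⟨h, hh, rfl⟩ := hp
    rw [hK', Finset.mem_filter, hmemK] at hh
    obtain ⟨hhH, hne⟩ := hh
    have hyB : y + h ∈ B := hcosets y hy h hhH
    have hzB : z - h ∈ B := by
      have := hcosets z hz (-h) (neg_mem hhH)
      rwa [← sub_eq_add_neg] at this
    refine ⟨Finset.card_pair hne, ?_, y + h, z - h, hne, rfl, by rw [← hyz]; abel⟩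
    intro w hw
    simp only [hf, Finset.coe_insert, Finset.coe_singleton, Set.mem_insert_iff,
      Set.mem_singleton_iff] at hw
    rcases hw with rfl | rfl
    · exact hyB
    · exact hzB
  -- f is at most 2-to-1 on K'
  have hfiber : K'.card ≤ 2 * (K'.image f).card := by
    apply Finset.card_le_mul_card_image
    intro a ha
    obtain ⟨h₀, hh₀, rfl⟩ := Finset.mem_image.mp ha
    have hsub : {h ∈ K' | f h = f h₀} ⊆ {h₀, z - h₀ - y} := by
      intro h hh
      rw [Finset.mem_filter] at hh
      have hmem : y + h ∈ f h₀ := by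
        rw [← hh.2]; simp [hf]
      simp only [hf, Finset.mem_insert, Finset.mem_singleton] at hmem
      rcases hmem with hc | hc
      · have : h = h₀ := add_left_cancel hc
        simp [this]
      · have : h = z - h₀ - y := eq_sub_of_add_eq' hc
        simp [this]
    calc {h ∈ K' | f h = f h₀}.card ≤ ({h₀, z - h₀ - y} : Finset G).card :=
          Finset.card_le_card hsub
      _ ≤ 2 := (Finset.card_insert_le _ _).trans (by simp)
  -- cardinality of K
  have hKH : K.card = Nat.card H := by
    rw [hKdef, Set.toFinset_card, Nat.card_eq_fintype_card]
    simp
  have hnK : n = K.card * q := by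
    rw [hKH, ← hq, ← hn, ← Nat.card_eq_fintype_card]
    exact (AddSubgroup.card_mul_index H).symm
  have hq0 : q ≠ 0 := by
    rw [← hq]
    exact AddSubgroup.index_ne_zero_of_finite
  -- conclude
  have hm : (K'.image f).card ≤ S.ncard := by
    have := Set.ncard_le_ncard hsubS (Set.toFinite S)
    rwa [Set.ncard_coe_finset] at this
  have hnat : K.card ≤ 2 * (K'.image f).card + 1 := by omega
  have hq0' : (0 : ℝ) < (q : ℝ) := by
    exact_mod_cast Nat.pos_of_ne_zero hq0
  have heq : (n : ℝ) / (2 * (q : ℝ)) = (K.card : ℝ) / 2 := by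
    rw [show (n : ℝ) = (K.card : ℝ) * (q : ℝ) by exact_mod_cast congrArg Nat.cast hnK]
    field_simp
  rw [heq]
  have h1 : (K.card : ℝ) ≤ 2 * ((K'.image f).card : ℝ) + 1 := by exact_mod_cast hnat
  have h2 : ((K'.image f).card : ℝ) ≤ (S.ncard : ℝ) := by exact_mod_cast hm
  linarith
end

section
/- Let G be a finite abelian group, let S ⊆ G be nonempty with 0 ∉ S, and let δ > 0. If λ(S) ≥ (δ − 1)·|S|, then λ(S ∪ (−S)) ≥ (δ/2 − 1)·|S ∪ (−S)|, where −S = {−s : s ∈ S}. -/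
open Pointwise

/-- The adjacency matrix of the directed Cayley graph of `S`: `A(S)_{x,y} = 1` iff `y − x ∈ S`. -/
noncomputable def cayleyMatrix {G : Type*} [AddCommGroup G] [Fintype G] [DecidableEq G]
    (S : Finset G) : Matrix G G ℂ :=
  Matrix.of fun x y => if y - x ∈ S then (1 : ℂ) else 0

section aux
variable {G : Type*} [AddCommGroup G] [Fintype G] [DecidableEq G]

lemma cayley_mul_comm (S₁ S₂ : Finset G) :
    cayleyMatrix S₁ * cayleyMatrix S₂ = cayleyMatrix S₂ * cayleyMatrix S₁ := by
  ext x y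
  simp only [Matrix.mul_apply, cayleyMatrix, Matrix.of_apply]
  refine Fintype.sum_equiv (Equiv.subLeft (x + y)) _ _ fun z => ?_
  simp only [Equiv.subLeft_apply]
  simp only [show x + y - z - x = y - z by abel, show y - (x + y - z) = z - x by abel]
  ring

lemma cayley_union (S K : Finset G) (hd : Disjoint S K) :
    cayleyMatrix (S ∪ K) = cayleyMatrix S + cayleyMatrix K := by
  ext x y
  simp only [cayleyMatrix, Matrix.add_apply, Matrix.of_apply, Finset.mem_union]
  by_cases h1 : y - x ∈ S <;> by_cases h2 : y - x ∈ K
  · exact absurd h2 (Finset.disjoint_left.mp hd h1)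
  · simp [h1, h2]
  · simp [h1, h2]
  · simp [h1, h2]

lemma cayley_row_sum (K : Finset G) (x : G) :
    ∑ y : G, (if y - x ∈ K then (1 : ℝ) else 0) = K.card := by
  rw [← Fintype.sum_equiv (Equiv.addRight x) (fun y => if y ∈ K then (1 : ℝ) else 0)
    (fun y => if y - x ∈ K then (1 : ℝ) else 0) (fun y => by simp)]
  simp [Finset.sum_ite_mem]

lemma cayley_eigen_abs_le (K : Finset G) (c : ℂ) (w : G → ℂ) (hw : w ≠ 0)
    (hc : (cayleyMatrix K).mulVec w = c • w) : ‖c‖ ≤ K.card := by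
  obtain ⟨x0, hx0⟩ : ∃ x0, w x0 ≠ 0 := Function.ne_iff.mp hw
  obtain ⟨x, -, hx⟩ := Finset.exists_max_image Finset.univ (fun y => ‖w y‖)
    ⟨x0, Finset.mem_univ x0⟩
  have hwx : 0 < ‖w x‖ :=
    lt_of_lt_of_le (by simpa using hx0) (hx x0 (Finset.mem_univ x0))
  have key : ‖c * w x‖ ≤ K.card * ‖w x‖ := by
    have := congrFun hc x
    simp only [Matrix.mulVec, dotProduct, Pi.smul_apply, smul_eq_mul] at this
    rw [← this]
    calc ‖∑ y : G, cayleyMatrix K x y * w y‖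
        ≤ ∑ y : G, ‖cayleyMatrix K x y * w y‖ := norm_sum_le _ _
      _ ≤ ∑ y : G, (if y - x ∈ K then (1:ℝ) else 0) * ‖w x‖ := by
          refine Finset.sum_le_sum fun y _ => ?_
          simp only [cayleyMatrix, Matrix.of_apply, norm_mul]
          by_cases hy : y - x ∈ K
          · simpa [hy] using hx y (Finset.mem_univ y)
          · simp [hy]
      _ = K.card * ‖w x‖ := by
          rw [← Finset.sum_mul, cayley_row_sum]
  rw [norm_mul] at key
  exact le_of_mul_le_mul_right key hwx

end aux

theorem stmt_18 (G : Type) [AddCommGroup G] [Fintype G] [DecidableEq G]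
    (S : Finset G) (hS : S.Nonempty) (h0 : (0 : G) ∉ S)
    (δ : ℝ) (hδ : 0 < δ)
    -- λ(S) ≥ (δ − 1)·|S| : every eigenvalue of A(S) has real part at least (δ − 1)·|S|
    (h : ∀ μ ∈ spectrum ℂ (cayleyMatrix S), (δ - 1) * (S.card : ℝ) ≤ μ.re) :
    -- λ(S ∪ (−S)) ≥ (δ/2 − 1)·|S ∪ (−S)|
    ∀ μ ∈ spectrum ℂ (cayleyMatrix (S ∪ -S)),
      (δ / 2 - 1) * (((S ∪ -S).card : ℕ) : ℝ) ≤ μ.re := by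
  intro μ hμ
  classical
  set K : Finset G := (-S) \ S with hKdef
  have hdisj : Disjoint S K := Finset.disjoint_sdiff
  have hunion : S ∪ -S = S ∪ K := by
    rw [hKdef, Finset.union_sdiff_self_eq_union]
  -- linear maps
  set f := Matrix.toLinAlgEquiv' (cayleyMatrix (S ∪ -S)) with hf
  set g := Matrix.toLinAlgEquiv' (cayleyMatrix S) with hg
  have hμf : Module.End.HasEigenvalue f μ := by
    rw [Module.End.hasEigenvalue_iff_mem_spectrum]
    rwa [hf, AlgEquiv.spectrum_eq]
  -- the eigenspace is invariant under g
  have hcomm : g * f = f * g := by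
    rw [hf, hg, ← map_mul, ← map_mul, cayley_mul_comm]
  have hinv : ∀ u ∈ Module.End.eigenspace f μ, g u ∈ Module.End.eigenspace f μ := by
    intro u hu
    rw [Module.End.mem_eigenspace_iff] at hu ⊢
    calc f (g u) = (f * g) u := rfl
      _ = (g * f) u := by rw [hcomm]
      _ = g (f u) := rfl
      _ = μ • g u := by rw [hu, map_smul]
  obtain ⟨v, hv⟩ := hμf.exists_hasEigenvector
  haveI : Nontrivial (Module.End.eigenspace f μ) :=
    ⟨⟨v, hv.1⟩, 0, by simp [hv.2]⟩
  set gr : Module.End ℂ (Module.End.eigenspace f μ) := g.restrict hinv with hgr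
  obtain ⟨c, hc⟩ := Module.End.exists_eigenvalue gr
  obtain ⟨w, hw⟩ := hc.exists_hasEigenvector
  have hwval : g w.val = c • w.val := by
    have := hw.apply_eq_smul
    have := congrArg Subtype.val this
    simpa [hgr, LinearMap.restrict_apply] using this
  have hwne : (w : G → ℂ) ≠ 0 := by
    intro hcon
    exact hw.2 (Subtype.ext hcon)
  -- c is in the spectrum of cayleyMatrix S
  have hcspec : c ∈ spectrum ℂ (cayleyMatrix S) := by
    rw [← AlgEquiv.spectrum_eq Matrix.toLinAlgEquiv' (cayleyMatrix S),
      ← Module.End.hasEigenvalue_iff_mem_spectrum]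
    exact Module.End.hasEigenvalue_of_hasEigenvector
      ⟨Module.End.mem_eigenspace_iff.mpr hwval, hwne⟩
  have hcre : (δ - 1) * (S.card : ℝ) ≤ c.re := h c hcspec
  -- w is an eigenvector of f with eigenvalue μ
  have hfw : f w.val = μ • w.val := Module.End.mem_eigenspace_iff.mp w.2
  -- the perturbation
  have hBw : (cayleyMatrix K).mulVec w.val = (μ - c) • (w : G → ℂ) := by
    have hsplit : cayleyMatrix (S ∪ -S) = cayleyMatrix S + cayleyMatrix K := by
      rw [hunion]; exact cayley_union S K hdisj
    have : f = g + Matrix.toLinAlgEquiv' (cayleyMatrix K) := by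
      rw [hf, hg, hsplit, map_add]
    have h2 : Matrix.toLinAlgEquiv' (cayleyMatrix K) w.val
        = (μ - c) • (w : G → ℂ) := by
      have := congrArg (· w.val) this
      rw [LinearMap.add_apply] at this
      rw [hwval, hfw] at this
      rw [sub_smul]
      exact eq_sub_of_add_eq' this.symm
    rw [← h2]
    rfl
  have habs : ‖μ - c‖ ≤ (K.card : ℝ) := cayley_eigen_abs_le K _ _ hwne hBw
  -- arithmetic
  have hren : c.re - (K.card : ℝ) ≤ μ.re := by
    have h1 : |(μ - c).re| ≤ ‖μ - c‖ := Complex.abs_re_le_norm _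
    have h2 : (μ - c).re = μ.re - c.re := by simp [Complex.sub_re]
    have := (abs_le.mp (h1.trans habs)).1
    linarith [this, h2 ▸ this]
  have hcard : ((S ∪ -S).card : ℝ) = (S.card : ℝ) + (K.card : ℝ) := by
    rw [hunion]
    rw [Finset.card_union_of_disjoint hdisj]
    push_cast
    ring
  have hle2 : ((S ∪ -S).card : ℝ) ≤ 2 * (S.card : ℝ) := by
    have := Finset.card_union_le S (-S)
    have hneg : (-S).card = S.card := Finset.card_neg S
    have : (S ∪ -S).card ≤ S.card + S.card := by omega
    have h2 : ((S ∪ -S).card : ℝ) ≤ (S.card : ℝ) + (S.card : ℝ) := by exact_mod_cast this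
    linarith
  -- combine
  have : (δ / 2 - 1) * ((S ∪ -S).card : ℝ) ≤ (δ - 1) * (S.card : ℝ) - (K.card : ℝ) := by
    nlinarith [hcard, hle2, hδ.le]
  push_cast
  linarith [hcre, hren, this]
end

section
/- Let c ∈ (0,1], let m ≥ 1, and let v₁, …, v_m be complex numbers of modulus 1. Suppose that for every ζ ∈ ℂ with |ζ| = 1, at most (1 − c)·m of the v_i lie in the open arc of the unit circle of angular length π/3 centered at ζ. Then |v₁ + ⋯ + v_m| ≤ (1 − c + c·cos(π/6))·m. -/
theorem stmt_19 (c : ℝ) (hc : 0 < c) (hc1 : c ≤ 1) (m : ℕ) (hm : 1 ≤ m)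
    (v : Fin m → ℂ) (hv : ∀ i, ‖v i‖ = 1)
    -- for every unit ζ, at most (1 − c)·m of the vᵢ lie in the open arc of angular
    -- length π/3 centred at ζ (i.e. have angular distance < π/6 from ζ)
    (harc : ∀ ζ : ℂ, ‖ζ‖ = 1 →
      (({i : Fin m | |Complex.arg (v i / ζ)| < Real.pi / 6} : Set (Fin m)).ncard : ℝ) ≤
        (1 - c) * (m : ℝ)) :
    ‖∑ i, v i‖ ≤ (1 - c + c * Real.cos (Real.pi / 6)) * (m : ℝ) := by
  have hcosv : Real.cos (Real.pi / 6) = Real.sqrt 3 / 2 := Real.cos_pi_div_six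
  have hcos0 : 0 ≤ Real.cos (Real.pi / 6) := by rw [hcosv]; positivity
  have hcos1 : Real.cos (Real.pi / 6) ≤ 1 := Real.cos_le_one _
  set S := ∑ i, v i with hS
  rcases eq_or_ne S 0 with h0 | h0
  · rw [h0, norm_zero]
    have hmn : (0:ℝ) ≤ m := Nat.cast_nonneg m
    nlinarith [mul_nonneg (mul_nonneg hc.le hcos0) hmn,
      mul_nonneg (sub_nonneg.2 hc1) hmn]
  · set ζ : ℂ := S / (‖S‖ : ℂ) with hζ
    have hSabs : ‖S‖ ≠ 0 := by simpa using h0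
    have hζabs : ‖ζ‖ = 1 := by
      rw [hζ, norm_div, Complex.norm_real, norm_norm,
        div_self hSabs]
    have hζ0 : ζ ≠ 0 := by
      intro h; rw [h] at hζabs; simp at hζabs
    have habs : ∀ i, ‖v i / ζ‖ = 1 := by
      intro i; rw [norm_div, hv, hζabs, div_one]
    have hne : ∀ i, v i / ζ ≠ 0 := by
      intro i h; have := habs i; rw [h] at this; simp at this
    have hre : ∀ i, (v i / ζ).re = Real.cos ((v i / ζ).arg) := by
      intro i
      rw [Complex.cos_arg (hne i), habs i, div_one]
    have hSζ : S / ζ = (‖S‖ : ℂ) := by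
      rw [hζ]; field_simp
    have key : ‖S‖ = ∑ i, Real.cos ((v i / ζ).arg) := by
      have h1 : ‖S‖ = (S / ζ).re := by rw [hSζ, Complex.ofReal_re]
      rw [h1, hS, Finset.sum_div, Complex.re_sum]
      exact Finset.sum_congr rfl fun i _ => hre i
    set A : Finset (Fin m) := Finset.univ.filter
      (fun i => |Complex.arg (v i / ζ)| < Real.pi / 6) with hA
    have hNcard : (({i : Fin m | |Complex.arg (v i / ζ)| < Real.pi / 6} :
        Set (Fin m)).ncard : ℝ) = (A.card : ℝ) := by
      congr 1
      rw [hA]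
      rw [← Set.ncard_coe_finset]
      congr 1
      ext i; simp
    have hN : (A.card : ℝ) ≤ (1 - c) * m := by
      rw [← hNcard]; exact harc ζ hζabs
    have hsplit : ∑ i, Real.cos ((v i / ζ).arg)
        = ∑ i ∈ A, Real.cos ((v i / ζ).arg) + ∑ i ∈ Aᶜ, Real.cos ((v i / ζ).arg) :=
      (Finset.sum_add_sum_compl A _).symm
    have hb1 : ∑ i ∈ A, Real.cos ((v i / ζ).arg) ≤ (A.card : ℝ) := by
      calc ∑ i ∈ A, Real.cos ((v i / ζ).arg) ≤ ∑ i ∈ A, (1:ℝ) :=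
            Finset.sum_le_sum fun i _ => Real.cos_le_one _
        _ = (A.card : ℝ) := by simp
    have hb2 : ∑ i ∈ Aᶜ, Real.cos ((v i / ζ).arg)
        ≤ (Aᶜ.card : ℝ) * Real.cos (Real.pi / 6) := by
      calc ∑ i ∈ Aᶜ, Real.cos ((v i / ζ).arg)
          ≤ ∑ i ∈ Aᶜ, Real.cos (Real.pi / 6) := by
            apply Finset.sum_le_sum
            intro i hi
            rw [Finset.mem_compl, hA, Finset.mem_filter] at hi
            have h6 : Real.pi / 6 ≤ |Complex.arg (v i / ζ)| := by
              by_contra h; exact hi ⟨Finset.mem_univ i, lt_of_not_ge h⟩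
            have := Complex.abs_arg_le_pi (v i / ζ)
            calc Real.cos ((v i / ζ).arg) = Real.cos |(v i / ζ).arg| :=
                  (Real.cos_abs _).symm
              _ ≤ Real.cos (Real.pi / 6) := by
                  apply Real.cos_le_cos_of_nonneg_of_le_pi
                  · positivity
                  · exact this
                  · exact h6
        _ = (Aᶜ.card : ℝ) * Real.cos (Real.pi / 6) := by
            rw [Finset.sum_const, nsmul_eq_mul]
    have hcards : (A.card : ℝ) + (Aᶜ.card : ℝ) = m := by
      have := Finset.card_add_card_compl A
      have h2 : A.card + Aᶜ.card = m := by simpa using this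
      exact_mod_cast h2
    rw [key, hsplit]
    have hmn : (0:ℝ) ≤ m := Nat.cast_nonneg m
    nlinarith [hb1, hb2, hN, hcards]
end
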